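/- arXiv:1709.05163 — 3 statements merged into one kernel-verified Lean document; each statement's English description precedes it below -/
import Mathlib

section
/- Let e ∈ {0, 1, …, N−1} and suppose 2e ≡ 1 − N/2 (mod N). For every odd shift τ = 2τ0 + 1 with 0 ≤ τ0 ≤ N−1, the periodic autocorrelation of S^e satisfies: R_{S^e}(2τ0+1) = −N − N1 if τ0 ≡ −e or τ0 ≡ e − 1 (mod N); and R_{S^e}(2τ0+1) = −2N2 otherwise. -/
open Finset

/-- The geometric sequence of the first type: `t¹ₙ = 1` iff the Legendre symbol of
`Tr(ω^n)` is `-1`, and `0` otherwise (i.e. when the symbol is `0` or `1`). -/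
noncomputable def ntuT1 (p : ℕ) [Fact p.Prime] {F : Type} [Field F]
    [Algebra (ZMod p) F] (ω : F) (n : ℕ) : ZMod 2 :=
  if legendreSym p ((Algebra.trace (ZMod p) F (ω ^ n)).val : ℤ) = -1 then 1 else 0

/-- The geometric sequence of the second type: `t²ₙ = 0` iff the Legendre symbol of
`Tr(ω^n)` is `1`, and `1` otherwise (i.e. when the symbol is `0` or `-1`). -/
noncomputable def ntuT2 (p : ℕ) [Fact p.Prime] {F : Type} [Field F]
    [Algebra (ZMod p) F] (ω : F) (n : ℕ) : ZMod 2 :=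
  if legendreSym p ((Algebra.trace (ZMod p) F (ω ^ n)).val : ℤ) = 1 then 0 else 1

/-- Periodic cross-correlation at shift `τ` of two `N`-periodic binary sequences:
`R_{s,s'}(τ) = Σ_{i=0}^{N-1} (-1)^{s_i + s'_{i+τ}}`, indices taken modulo `N`. -/
def pcorr (N : ℕ) (s s' : ℕ → ZMod 2) (τ : ℤ) : ℤ :=
  ∑ i ∈ Finset.range N, (-1 : ℤ) ^ ((s i + s' ((((i : ℤ) + τ) % (N : ℤ)).toNat)).val)

/-- The interleaved sequence of `t` and the left shift by `e` of `u`: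
`n = 2j ↦ t j`, `n = 2j+1 ↦ u (j + e)`. -/
def ntuInterleave (t u : ℕ → ZMod 2) (e : ℕ) (n : ℕ) : ZMod 2 :=
  if n % 2 = 0 then t (n / 2) else u (n / 2 + e)


open Finset

lemma aux_neg_one_pow_add (a b : ZMod 2) :
    (-1:ℤ) ^ ((a+b).val) = (-1:ℤ)^a.val * (-1:ℤ)^b.val := by
  revert a b; decide

lemma aux_sum_even_odd (h : ℕ → ℤ) (n : ℕ) :
    ∑ i ∈ range (2*n), h i = ∑ j ∈ range n, (h (2*j) + h (2*j+1)) := by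
  induction n with
  | zero => simp
  | succ k ih =>
    have : 2*(k+1) = 2*k + 1 + 1 := by ring
    rw [this, sum_range_succ, sum_range_succ, sum_range_succ, ih]
    ring

lemma aux_periodic_mul {G : ℕ → ℤ} {N : ℕ} (hG : ∀ n, G (n+N) = G n) :
    ∀ (k n : ℕ), G (n + k*N) = G n := by
  intro k
  induction k with
  | zero => simp
  | succ j ih =>
    intro n
    have : n + (j+1)*N = (n + j*N) + N := by ring
    rw [this, hG, ih]

lemma aux_periodic_sum {G : ℕ → ℤ} {N : ℕ} (hG : ∀ n, G (n+N) = G n) (q : ℕ) :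
    ∑ i ∈ range (q*N), G i = q * ∑ i ∈ range N, G i := by
  induction q with
  | zero => simp
  | succ j ih =>
    have : (j+1)*N = j*N + N := by ring
    rw [this, sum_range_add, ih]
    have : ∀ x ∈ range N, G (j*N + x) = G x := by
      intro x _
      have : j*N + x = x + j*N := by ring
      rw [this, aux_periodic_mul hG]
    rw [sum_congr rfl this]
    push_cast; ring

lemma aux_sum_shift {G : ℕ → ℤ} {N : ℕ} (hG : ∀ n, G (n+N) = G n) (k : ℕ) :
    ∑ j ∈ range N, G (j+k) = ∑ j ∈ range N, G j := by
  induction k with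
  | zero => simp
  | succ i ih =>
    have h1 : ∑ j ∈ range N, G (j+(i+1)) = ∑ j ∈ range N, G ((j+1)+i) := by
      apply sum_congr rfl; intro x _; ring_nf
    rw [h1, ← ih]
    have h2 := Finset.sum_range_succ (fun j => G (j+i)) N
    have h3 := Finset.sum_range_succ' (fun j => G (j+i)) N
    have h4 : G (N + i) = G (0 + i) := by
      have : N + i = (0 + i) + N := by ring
      rw [this, hG]
    rw [h4] at h2
    -- h2 : ∑ range (N+1) = ∑_{j<N} G (j+i) + G(0+i); h3: = ∑_{j<N} G (j+1+i) + G (0+i)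
    have := h2.symm.trans h3
    exact (add_right_cancel this).symm

open Finset

section FieldPart
variable (p : ℕ) [Fact p.Prime] (F : Type) [Field F] [Fintype F] [Algebra (ZMod p) F]

-- fiber counting for surjective linear maps
lemma aux_fiber_sum (V : Type) [AddCommGroup V] [Module (ZMod p) V] [Fintype V]
    [DecidableEq V] (L : F →ₗ[ZMod p] V) (hL : Function.Surjective L) (h : V → ℤ) :
    (Fintype.card V : ℤ) * ∑ x : F, h (L x) = (Fintype.card F : ℤ) * ∑ y : V, h y := by
  classical
  have key : ∑ x : F, h (L x) = (Nat.card (LinearMap.ker L) : ℤ) * ∑ y : V, h y := by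
    rw [← Fintype.sum_fiberwise (fun x => L x) (fun x => h (L x))]
    rw [Finset.mul_sum]
    apply sum_congr rfl
    intro y _
    have hconst : ∀ x : {x // L x = y}, h (L x.1) = h y := by
      intro x; rw [x.2]
    rw [sum_congr rfl (fun x _ => hconst x), sum_const, nsmul_eq_mul, Finset.card_univ]
    congr 1
    -- card of fiber = card of kernel
    obtain ⟨x₀, hx₀⟩ := hL y
    have : Fintype.card {x // L x = y} = Nat.card (LinearMap.ker L) := by
      rw [← Nat.card_eq_fintype_card]
      apply Nat.card_congr
      refine ⟨fun x => ⟨x.1 - x₀, ?_⟩, fun z => ⟨z.1 + x₀, ?_⟩, ?_, ?_⟩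
      · simp [LinearMap.mem_ker, map_sub, x.2, hx₀]
      · have := z.2
        rw [LinearMap.mem_ker] at this
        simp [map_add, this, hx₀]
      · intro x; ext; simp
      · intro z; ext; simp
    exact_mod_cast congrArg Nat.cast this
  rw [key]
  have hcard : (Nat.card V : ℤ) * (Nat.card (LinearMap.ker L)) = Nat.card F := by
    have h1 := Submodule.card_eq_card_quotient_mul_card (LinearMap.ker L)
    have e2 : (F ⧸ LinearMap.ker L) ≃ₗ[ZMod p] V := L.quotKerEquivOfSurjective hL
    have h2 : Nat.card (F ⧸ LinearMap.ker L) = Nat.card V := Nat.card_congr e2.toEquiv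
    push_cast [h1, h2]
    ring
  rw [Nat.card_eq_fintype_card] at hcard
  rw [← mul_assoc, hcard]
  simp [Nat.card_eq_fintype_card]

-- elements fixed by frobenius are in the prime field
lemma aux_mem_prime_field (hp1 : 1 < p) (x : F) (hx : x ^ p = x) :
    ∃ u : ZMod p, algebraMap (ZMod p) F u = x := by
  classical
  set P : Polynomial F := Polynomial.X ^ p - Polynomial.X with hP
  have hPne : P ≠ 0 := by
    intro h
    have : P.coeff p = 1 := by
      simp only [hP, Polynomial.coeff_sub, Polynomial.coeff_X_pow, Polynomial.coeff_X]
      rw [if_pos trivial, if_neg (by omega : ¬ (1 = p))]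
      ring
    rw [h] at this; simp at this
  have hdeg : P.natDegree ≤ p := by
    refine le_trans (Polynomial.natDegree_sub_le _ _) ?_
    simp [Polynomial.natDegree_X_pow, Polynomial.natDegree_X]
    omega
  set S : Finset F := Finset.image (algebraMap (ZMod p) F) Finset.univ with hS
  have hcardS : S.card = p := by
    rw [hS, Finset.card_image_of_injective _ (algebraMap (ZMod p) F).injective]
    simp [ZMod.card]
  have hsub : S ⊆ P.roots.toFinset := by
    intro z hz
    rw [hS, Finset.mem_image] at hz
    obtain ⟨u, _, hu⟩ := hz
    rw [Multiset.mem_toFinset, Polynomial.mem_roots hPne]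
    show Polynomial.eval z P = 0
    simp only [hP, Polynomial.eval_sub, Polynomial.eval_pow, Polynomial.eval_X]
    rw [← hu, ← map_pow, ZMod.pow_card, sub_self]
  have hcardR : P.roots.toFinset.card ≤ p :=
    le_trans (Multiset.toFinset_card_le _) (le_trans (Polynomial.card_roots' P) hdeg)
  have hEq : S = P.roots.toFinset := Finset.eq_of_subset_of_card_le hsub (by omega)
  have hxroot : x ∈ P.roots.toFinset := by
    rw [Multiset.mem_toFinset, Polynomial.mem_roots hPne]
    show Polynomial.eval x P = 0
    simp [hP, hx]
  rw [← hEq, hS, Finset.mem_image] at hxroot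
  obtain ⟨u, _, hu⟩ := hxroot
  exact ⟨u, hu⟩

end FieldPart

open Finset

section PartC
variable (p : ℕ) [Fact p.Prime] (F : Type) [Field F] [Fintype F] [Algebra (ZMod p) F]

noncomputable def auxT : F →ₗ[ZMod p] (ZMod p) := Algebra.trace (ZMod p) F

lemma auxT_ne_zero : auxT p F ≠ 0 := Algebra.trace_ne_zero (ZMod p) F

lemma auxT_surj : Function.Surjective (auxT p F) := by
  have h := auxT_ne_zero p F
  have : ∃ x : F, auxT p F x ≠ 0 := by
    by_contra hc
    push_neg at hc
    exact h (LinearMap.ext fun x => hc x)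
  obtain ⟨x, hx⟩ := this
  intro c
  refine ⟨(c * (auxT p F x)⁻¹) • x, ?_⟩
  rw [map_smul, smul_eq_mul]
  field_simp

lemma auxT_algebraMap_mul (u : ZMod p) (x : F) :
    auxT p F (algebraMap (ZMod p) F u * x) = u * auxT p F x := by
  rw [← Algebra.smul_def, map_smul, smul_eq_mul]

-- For c not in the prime field, x ↦ (T x, T (c x)) is surjective.
lemma aux_pair_surj (c : F) (hc : ∀ u : ZMod p, algebraMap (ZMod p) F u ≠ c) :
    Function.Surjective (LinearMap.prod (auxT p F)
      ((auxT p F).comp (LinearMap.mulLeft (ZMod p) c))) := by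
  set T := auxT p F
  -- key : ∃ x, T x = 0 ∧ T (c * x) ≠ 0, and ∃ x, T (c*x) = 0 ∧ T x ≠ 0
  have hTne := auxT_ne_zero p F
  have hTsurj := auxT_surj p F
  have key1 : ∃ x, T x = 0 ∧ T (c * x) ≠ 0 := by
    by_contra hk
    push_neg at hk
    -- then T(c x) = λ T x for λ = T(c x₀) with T x₀ = 1
    obtain ⟨x₀, hx₀⟩ := hTsurj 1
    set l := T (c * x₀) with hl
    have hlin : ∀ x : F, T (c * x) = l * T x := by
      intro x
      have hker : T (x - (T x) • x₀) = 0 := by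
        rw [map_sub, map_smul, hx₀, smul_eq_mul, mul_one, sub_self]
      have := hk _ hker
      have hexp : c * x = c * (x - (T x) • x₀) + (T x) • (c * x₀) := by
        rw [mul_sub, mul_smul_comm, sub_add_cancel]
      rw [hexp, map_add, map_smul, this, smul_eq_mul, zero_add, hl]
      ring
    -- so T ((c - algebraMap l) x) = 0 for all x
    have hzero : ∀ x : F, T ((c - algebraMap (ZMod p) F l) * x) = 0 := by
      intro x
      rw [sub_mul, map_sub, hlin, auxT_algebraMap_mul, mul_comm, sub_self]
    have hcl : c = algebraMap (ZMod p) F l := by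
      by_contra hne
      have hw : c - algebraMap (ZMod p) F l ≠ 0 := sub_ne_zero_of_ne hne
      apply hTne
      ext y
      have := hzero ((c - algebraMap (ZMod p) F l)⁻¹ * y)
      rw [← mul_assoc, mul_inv_cancel₀ hw, one_mul] at this
      simpa using this
    exact hc l hcl.symm
  have key2 : ∃ x, T (c * x) = 0 ∧ T x ≠ 0 := by
    by_contra hk
    push_neg at hk
    -- T x = l' * T(c x) for all x
    have hc0 : c ≠ 0 := by
      intro h; exact hc 0 (by simp [h])
    have hsurj2 : Function.Surjective (fun x => T (c * x)) := by
      intro y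
      obtain ⟨z, hz⟩ := hTsurj y
      exact ⟨c⁻¹ * z, by show T (c * (c⁻¹ * z)) = y; rw [← mul_assoc, mul_inv_cancel₀ hc0, one_mul]; exact hz⟩
    obtain ⟨x₀, hx₀⟩ := hsurj2 1
    simp only at hx₀
    set l := T x₀ with hl
    have hlin : ∀ x : F, T x = l * T (c * x) := by
      intro x
      have hker : T (c * (x - (T (c * x)) • x₀)) = 0 := by
        rw [mul_sub, map_sub, mul_smul_comm, map_smul, hx₀, smul_eq_mul, mul_one, sub_self]
      have := hk _ hker
      have hexp : x = (x - (T (c*x)) • x₀) + (T (c*x)) • x₀ := by ring_nf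
      rw [hexp, map_add, map_smul, this, smul_eq_mul, zero_add, hl]
      ring
    have hl0 : l ≠ 0 := by
      intro h
      apply hTne
      ext y
      have := hlin y
      rw [h, zero_mul] at this
      simpa using this
    -- T ((1 - algebraMap l * c) x) = 0 ∀ x  →  algebraMap l * c = 1
    have hzero : ∀ x : F, T ((1 - algebraMap (ZMod p) F l * c) * x) = 0 := by
      intro x
      rw [sub_mul, one_mul, map_sub, mul_assoc, auxT_algebraMap_mul, ← hlin, sub_self]
    have hcl : (1 : F) = algebraMap (ZMod p) F l * c := by
      by_contra hne
      have hw : (1:F) - algebraMap (ZMod p) F l * c ≠ 0 := sub_ne_zero_of_ne hne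
      apply hTne
      ext y
      have := hzero (((1:F) - algebraMap (ZMod p) F l * c)⁻¹ * y)
      rw [← mul_assoc, mul_inv_cancel₀ hw, one_mul] at this
      simpa using this
    have : c = (algebraMap (ZMod p) F l)⁻¹ := eq_inv_of_mul_eq_one_right hcl.symm
    rw [← map_inv₀] at this
    exact hc l⁻¹ this.symm
  obtain ⟨x₁, hx₁0, hx₁⟩ := key1
  obtain ⟨x₂, hx₂0, hx₂⟩ := key2
  rintro ⟨a, b⟩
  refine ⟨(a * (T x₂)⁻¹) • x₂ + (b * (T (c * x₁))⁻¹) • x₁, ?_⟩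
  simp only [LinearMap.prod_apply, Function.prod, LinearMap.comp_apply, LinearMap.mulLeft_apply]
  rw [Prod.mk.injEq]
  constructor
  · rw [map_add, map_smul, map_smul, hx₁0, smul_eq_mul, smul_eq_mul, mul_zero, add_zero]
    field_simp
  · rw [mul_add, map_add, mul_smul_comm, mul_smul_comm, map_smul, map_smul, hx₂0,
      smul_eq_mul, smul_eq_mul, mul_zero, zero_add]
    field_simp

end PartC

open Finset

lemma aux_geom (p : ℕ) (hp : 1 ≤ p) (k : ℕ) :
    (p - 1) * (∑ i ∈ range k, p ^ i) = p ^ k - 1 := by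
  induction k with
  | zero => simp
  | succ j ih =>
    rw [sum_range_succ, Nat.mul_add, ih]
    have h1 : 1 ≤ p ^ j := Nat.one_le_pow _ _ hp
    have h5 : 1 ≤ p ^ (j+1) := Nat.one_le_pow _ _ hp
    zify [h1, hp, h5]
    push_cast [pow_succ]
    ring

section PartD
variable (p m : ℕ) [Fact p.Prime] (F : Type) [Field F] [Fintype F] [Algebra (ZMod p) F]
  (hcard : Fintype.card F = p ^ m) (ω : F) (hω : orderOf ω = p ^ m - 1) (hm : 1 < m)

include hm in
lemma aux_pm_pos : 0 < p ^ m - 1 := by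
  have hp : 2 ≤ p := (Fact.out : p.Prime).two_le
  have : 2 ^ 1 ≤ p ^ m :=
    le_trans (Nat.pow_le_pow_right (by omega) (by omega : 1 ≤ m)) (Nat.pow_le_pow_left hp m)
  omega

include hω hm in
lemma aux_omega_ne_zero : ω ≠ 0 := by
  intro h
  have h1 := pow_orderOf_eq_one ω
  rw [hω, h, zero_pow (by have := aux_pm_pos p m hm; omega)] at h1
  exact zero_ne_one h1

include hcard hω hm in
lemma aux_dlog (x : F) (hx : x ≠ 0) : ∃ n, n < p ^ m - 1 ∧ ω ^ n = x := by
  classical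
  have hω0 := aux_omega_ne_zero p m F ω hω hm
  have hMpos := aux_pm_pos p m hm
  set ωu : Fˣ := Units.mk0 ω hω0 with hωu
  have hord : orderOf ωu = p ^ m - 1 := by
    rw [← hω, ← orderOf_units]; rfl
  have htop : Subgroup.zpowers ωu = ⊤ := by
    apply Subgroup.eq_top_of_card_eq
    rw [Nat.card_zpowers, hord, Nat.card_eq_fintype_card, Fintype.card_units, hcard]
  set xu : Fˣ := Units.mk0 x hx with hxu
  have : xu ∈ Subgroup.zpowers ωu := htop ▸ Subgroup.mem_top xu
  obtain ⟨k, hk⟩ := Subgroup.mem_zpowers_iff.mp this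
  set M : ℕ := p ^ m - 1 with hM
  refine ⟨(k % (M : ℤ)).toNat, ?_, ?_⟩
  · have h1 : k % (M : ℤ) < (M : ℤ) := Int.emod_lt_of_pos k (by exact_mod_cast hMpos)
    omega
  · have h2 : 0 ≤ k % (M : ℤ) := Int.emod_nonneg k (by exact_mod_cast hMpos.ne')
    have h3 : ωu ^ ((k % (M:ℤ)).toNat) = xu := by
      have : ωu ^ (k % (M:ℤ)) = ωu ^ k := by
        conv_rhs => rw [← Int.emod_add_mul_ediv k (M:ℤ)]
        rw [zpow_add, zpow_mul]
        have : ωu ^ (M:ℤ) = 1 := by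
          rw [zpow_natCast, ← hord, pow_orderOf_eq_one]
        rw [this, one_zpow, mul_one]
      rw [← zpow_natCast, Int.toNat_of_nonneg h2, this, hk]
    have := congrArg (Units.val) h3
    rw [Units.val_pow_eq_pow_val] at this
    exact this
end PartD

open Finset

section PartE
variable (p m : ℕ) [Fact p.Prime] (hp2 : p ≠ 2) (F : Type) [Field F] [Fintype F]
  [Algebra (ZMod p) F]
  (ω : F) (hω : orderOf ω = p ^ m - 1) (hm : 1 < m)
  (σ : ℕ) (hσ : (p - 1) * σ = p ^ m - 1)

include hp2 hω hm hσ in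
lemma aux_u0 : ∃ u₀ : ZMod p, algebraMap (ZMod p) F u₀ = ω ^ σ ∧ u₀ ≠ 0 ∧
    quadraticChar (ZMod p) u₀ = -1 := by
  classical
  have hp1 : 1 < p := (Fact.out : p.Prime).one_lt
  have hω0 : ω ≠ 0 := aux_omega_ne_zero p m F ω hω hm
  have hdvd : σ ∣ p ^ m - 1 := ⟨p - 1, by rw [← hσ]; ring⟩
  have hσ1 : 1 ≤ σ := by
    rcases Nat.eq_zero_or_pos σ with h | h
    · rw [h, Nat.mul_zero] at hσ
      have : 2 ^ 1 ≤ p ^ m :=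
        le_trans (Nat.pow_le_pow_right (by omega) (by omega : 1 ≤ m)) (Nat.pow_le_pow_left hp1 m)
      omega
    · exact h
  -- x := ω ^ σ satisfies x^(p-1) = 1
  have hx1 : (ω ^ σ) ^ (p - 1) = 1 := by
    rw [← pow_mul, mul_comm σ (p-1), hσ, ← hω, pow_orderOf_eq_one]
  have hxp : (ω ^ σ) ^ p = ω ^ σ := by
    have : p = (p - 1) + 1 := by omega
    rw [this, pow_succ, hx1, one_mul]
  obtain ⟨u₀, hu₀⟩ := aux_mem_prime_field p F hp1 (ω ^ σ) hxp
  have hωσ0 : ω ^ σ ≠ 0 := pow_ne_zero _ hω0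
  have hu0ne : u₀ ≠ 0 := by
    intro h; rw [h, map_zero] at hu₀; exact hωσ0 hu₀.symm
  refine ⟨u₀, hu₀, hu0ne, ?_⟩
  -- orderOf u₀ = p - 1
  have hMpos : 0 < p ^ m - 1 := by
    have : 2 ^ 1 ≤ p ^ m :=
      le_trans (Nat.pow_le_pow_right (by omega) (by omega : 1 ≤ m)) (Nat.pow_le_pow_left hp1 m)
    omega
  set ωu : Fˣ := Units.mk0 ω hω0 with hωu
  have hordu : orderOf ωu = p ^ m - 1 := by rw [← hω, ← orderOf_units]; rfl
  have hord1 : orderOf (ωu ^ σ) = p - 1 := by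
    rw [orderOf_pow, hordu, Nat.gcd_eq_right hdvd, ← hσ, mul_comm]
    exact Nat.mul_div_cancel_left _ (by omega)
  have hord2 : orderOf (ω ^ σ) = p - 1 := by
    rw [← hord1, ← orderOf_units]
    congr 1
  have hordu0 : orderOf u₀ = p - 1 := by
    have h := orderOf_injective (algebraMap (ZMod p) F).toMonoidHom
      (algebraMap (ZMod p) F).injective u₀
    rw [show ((algebraMap (ZMod p) F).toMonoidHom u₀ : F) = algebraMap (ZMod p) F u₀ from rfl,
      hu₀, hord2] at h
    exact h.symm
  -- u₀ is not a square
  rw [quadraticChar_neg_one_iff_not_isSquare]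
  intro hsq
  obtain ⟨v, hv⟩ := hsq
  have hv0 : v ≠ 0 := by
    intro h; rw [h, mul_zero] at hv; exact hu0ne hv
  have hq : p - 1 = 2 * ((p - 1) / 2) := by
    have := (Fact.out : p.Prime).two_le
    have hodd := (Fact.out : p.Prime).odd_of_ne_two hp2
    obtain ⟨t, ht⟩ := hodd
    omega
  have : u₀ ^ ((p-1)/2) = 1 := by
    rw [hv, ← pow_two, ← pow_mul, ← hq, ZMod.pow_card_sub_one_eq_one hv0]
  have hdvd2 : orderOf u₀ ∣ (p-1)/2 := orderOf_dvd_of_pow_eq_one this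
  rw [hordu0] at hdvd2
  have := Nat.le_of_dvd (by omega) hdvd2
  omega

end PartE

open Finset

section PartF
variable (p : ℕ) [Fact p.Prime] (hp2 : p ≠ 2)

noncomputable def auxf : ZMod p → ℤ := fun a => if a = 0 then 1 else quadraticChar (ZMod p) a
noncomputable def auxg : ZMod p → ℤ := fun a => if a = 0 then -1 else quadraticChar (ZMod p) a

include hp2 in
lemma aux_ringChar : ringChar (ZMod p) ≠ 2 := by
  rw [ZMod.ringChar_zmod_n]; exact hp2

lemma aux_chi_sq (a : ZMod p) (ha : a ≠ 0) :
    quadraticChar (ZMod p) a * quadraticChar (ZMod p) a = 1 := by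
  rcases quadraticChar_dichotomy ha with h | h <;> rw [h] <;> norm_num

include hp2 in
lemma aux_sum_f : ∑ a : ZMod p, auxf p a = 1 := by
  have h : ∀ a : ZMod p, auxf p a = quadraticChar (ZMod p) a + (if a = 0 then 1 else 0) := by
    intro a; by_cases h : a = 0 <;> simp [auxf, h]
  rw [sum_congr rfl (fun a _ => h a), sum_add_distrib, quadraticChar_sum_zero (aux_ringChar p hp2)]
  simp

include hp2 in
lemma aux_sum_g : ∑ a : ZMod p, auxg p a = -1 := by
  have h : ∀ a : ZMod p, auxg p a = quadraticChar (ZMod p) a + (if a = 0 then -1 else 0) := by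
    intro a; by_cases h : a = 0 <;> simp [auxg, h]
  rw [sum_congr rfl (fun a _ => h a), sum_add_distrib, quadraticChar_sum_zero (aux_ringChar p hp2)]
  simp

lemma aux_f_inv (v a : ZMod p) (hv : v ≠ 0) (hχ : quadraticChar (ZMod p) v = 1) :
    auxf p (v * a) = auxf p a := by
  by_cases h : a = 0
  · simp [auxf, h]
  · have hva : v * a ≠ 0 := mul_ne_zero hv h
    simp only [auxf, if_neg h, if_neg hva, map_mul, hχ, one_mul]

lemma aux_g_inv (v a : ZMod p) (hv : v ≠ 0) (hχ : quadraticChar (ZMod p) v = 1) :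
    auxg p (v * a) = auxg p a := by
  by_cases h : a = 0
  · simp [auxg, h]
  · have hva : v * a ≠ 0 := mul_ne_zero hv h
    simp only [auxg, if_neg h, if_neg hva, map_mul, hχ, one_mul]

-- generic mixed sum
lemma aux_mix (Fn Gn : ZMod p → ℤ)
    (hFχ : ∀ a : ZMod p, a ≠ 0 → Fn a = quadraticChar (ZMod p) a)
    (hGχ : ∀ a : ZMod p, a ≠ 0 → Gn a = quadraticChar (ZMod p) a)
    (h0 : Fn 0 * Gn 0 = -1)
    (u : ZMod p) (hu : u ≠ 0) :
    ∑ a : ZMod p, Fn a * Gn (u * a) = -1 + ((p:ℤ) - 1) * quadraticChar (ZMod p) u := by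
  classical
  rw [← Finset.add_sum_erase _ _ (mem_univ (0:ZMod p))]
  rw [mul_zero, h0]
  have h : ∀ a ∈ univ.erase (0 : ZMod p), Fn a * Gn (u * a) = quadraticChar (ZMod p) u := by
    intro a ha
    have ha0 : a ≠ 0 := (Finset.mem_erase.mp ha).1
    have hua : u * a ≠ 0 := mul_ne_zero hu ha0
    rw [hFχ a ha0, hGχ _ hua, map_mul]
    rw [show quadraticChar (ZMod p) a * (quadraticChar (ZMod p) u * quadraticChar (ZMod p) a)
      = quadraticChar (ZMod p) u * (quadraticChar (ZMod p) a * quadraticChar (ZMod p) a) by ring,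
      aux_chi_sq p a ha0, mul_one]
  rw [sum_congr rfl h, sum_const, Finset.card_erase_of_mem (mem_univ _), Finset.card_univ,
    ZMod.card, nsmul_eq_mul]
  have hp1 : 1 ≤ p := (Fact.out : p.Prime).one_le
  push_cast [Nat.cast_sub hp1]
  ring

lemma aux_f_ne (a : ZMod p) (ha : a ≠ 0) : auxf p a = quadraticChar (ZMod p) a := by
  simp [auxf, ha]
lemma aux_g_ne (a : ZMod p) (ha : a ≠ 0) : auxg p a = quadraticChar (ZMod p) a := by
  simp [auxg, ha]
lemma aux_f0g0 : auxf p 0 * auxg p 0 = -1 := by simp [auxf, auxg]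
lemma aux_g0f0 : auxg p 0 * auxf p 0 = -1 := by simp [auxf, auxg]

end PartF

open Finset

lemma aux_mod1 (a N : ℕ) (hN : 0 < N) : (2*a+1) % (2*N) = 2*(a % N)+1 := by
  conv_lhs => rw [← Nat.div_add_mod a N]
  have h1 : 2*(N*(a/N) + a % N)+1 = (2*(a % N)+1) + (a/N)*(2*N) := by ring
  rw [h1, Nat.add_mul_mod_self_right, Nat.mod_eq_of_lt (by have := Nat.mod_lt a hN; omega)]

section PartH
variable (p : ℕ) [Fact p.Prime] (F : Type) [Field F] [Fintype F] [Algebra (ZMod p) F]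

lemma aux_leg (a : ZMod p) : legendreSym p ((a.val : ℤ)) = quadraticChar (ZMod p) a := by
  have h : (((a.val : ℤ)) : ZMod p) = a := by
    push_cast [ZMod.natCast_val]
    simp [ZMod.cast_id]
  rw [show legendreSym p ((a.val:ℤ))
    = quadraticChar (ZMod p) (((a.val:ℤ)):ZMod p) from rfl, h]

lemma aux_t1 (ω : F) (n : ℕ) :
    (-1:ℤ)^((ntuT1 p ω n).val) = auxf p (auxT p F (ω^n)) := by
  set a : ZMod p := auxT p F (ω^n) with ha
  have hTa : Algebra.trace (ZMod p) F (ω^n) = a := rfl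
  rw [ntuT1, hTa, aux_leg]
  by_cases h : quadraticChar (ZMod p) a = -1
  · have ha0 : a ≠ 0 := by
      intro h0; rw [h0, quadraticChar_zero] at h; norm_num at h
    rw [if_pos h, auxf, if_neg ha0, h]
    rfl
  · rw [if_neg h, auxf]
    by_cases h0 : a = 0
    · rw [if_pos h0]; rfl
    · rw [if_neg h0]
      rcases quadraticChar_dichotomy h0 with h1 | h1
      · rw [h1]; rfl
      · exact absurd h1 h
lemma aux_t2 (ω : F) (n : ℕ) :
    (-1:ℤ)^((ntuT2 p ω n).val) = auxg p (auxT p F (ω^n)) := by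
  set a : ZMod p := auxT p F (ω^n) with ha
  have hTa : Algebra.trace (ZMod p) F (ω^n) = a := rfl
  rw [ntuT2, hTa, aux_leg]
  by_cases h : quadraticChar (ZMod p) a = 1
  · have ha0 : a ≠ 0 := by
      intro h0; rw [h0, quadraticChar_zero] at h; norm_num at h
    rw [if_pos h, auxg, if_neg ha0, h]
    rfl
  · rw [if_neg h, auxg]
    by_cases h0 : a = 0
    · rw [if_pos h0]; rfl
    · rw [if_neg h0]
      rcases quadraticChar_dichotomy h0 with h1 | h1
      · exact absurd h1 h
      · rw [h1]; rfl

end PartH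

open Finset

section PartG
variable (p m : ℕ) [Fact p.Prime] (hp2 : p ≠ 2) (F : Type) [Field F] [Fintype F]
  [Algebra (ZMod p) F] (hcard : Fintype.card F = p ^ m)
  (ω : F) (hω : orderOf ω = p ^ m - 1) (hm : 1 < m)
  (σ : ℕ) (hσ : (p - 1) * σ = p ^ m - 1)

include hω hm hσ in
lemma aux_pow_not_mem (d : ℕ) (hnd : ¬ σ ∣ d) :
    ∀ u : ZMod p, algebraMap (ZMod p) F u ≠ ω ^ d := by
  intro u h
  have hω0 : ω ≠ 0 := aux_omega_ne_zero p m F ω hω hm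
  have hωd : ω ^ d ≠ 0 := pow_ne_zero _ hω0
  have hu : u ≠ 0 := by
    intro h0; rw [h0, map_zero] at h; exact hωd h.symm
  have h1 : (ω ^ d) ^ (p - 1) = 1 := by
    rw [← h, ← map_pow, ZMod.pow_card_sub_one_eq_one hu, map_one]
  rw [← pow_mul] at h1
  have h2 : orderOf ω ∣ d * (p - 1) := orderOf_dvd_of_pow_eq_one h1
  rw [hω, ← hσ] at h2
  have h3 : σ * (p - 1) ∣ d * (p - 1) := by
    rwa [mul_comm (p-1) σ] at h2
  have hp1 : 0 < p - 1 := by have := (Fact.out : p.Prime).two_le; omega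
  exact hnd ((Nat.mul_dvd_mul_iff_right hp1).mp h3)

include hp2 hcard hω hm hσ in
lemma aux_corr (Fn Gn : ZMod p → ℤ)
    (hFG0 : Fn 0 * Gn 0 = -1)
    (hsum : (∑ a : ZMod p, Fn a) * (∑ a : ZMod p, Gn a) = -1)
    (hmix : ∀ u : ZMod p, u ≠ 0 →
      ∑ a : ZMod p, Fn a * Gn (u * a) = -1 + ((p:ℤ) - 1) * quadraticChar (ZMod p) u)
    (hFinv : ∀ v a : ZMod p, v ≠ 0 → quadraticChar (ZMod p) v = 1 → Fn (v * a) = Fn a)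
    (hGinv : ∀ v a : ZMod p, v ≠ 0 → quadraticChar (ZMod p) v = 1 → Gn (v * a) = Gn a)
    (d : ℕ) :
    ((p:ℤ) - 1) * ∑ j ∈ range (2*σ), Fn (auxT p F (ω ^ j)) * Gn (auxT p F (ω ^ (j + d))) =
      if 2*σ ∣ d then 2*(p:ℤ)^m - 4*(p:ℤ)^(m-1) + 2
      else if σ ∣ d then 2 - 2*(p:ℤ)^m
      else 2 - 2*(p:ℤ)^(m-2) := by
  classical
  have hp1 : 1 < p := (Fact.out : p.Prime).one_lt
  have hω0 : ω ≠ 0 := aux_omega_ne_zero p m F ω hω hm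
  have hMpos : 0 < p ^ m - 1 := aux_pm_pos p m hm
  have hσ1 : 1 ≤ σ := by
    rcases Nat.eq_zero_or_pos σ with h | h
    · rw [h, Nat.mul_zero] at hσ; omega
    · exact h
  obtain ⟨u₀, hu₀, hu₀ne, hu₀χ⟩ := aux_u0 p m hp2 F ω hω hm σ hσ
  set T := auxT p F with hT
  set G : ℕ → ℤ := fun n => Fn (T (ω ^ n)) * Gn (T (ω ^ (n + d))) with hGdef
  -- periodicity
  have hsq : u₀ * u₀ ≠ 0 := mul_ne_zero hu₀ne hu₀ne
  have hχsq : quadraticChar (ZMod p) (u₀ * u₀) = 1 := by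
    rw [map_mul, hu₀χ]; norm_num
  have halg2 : ∀ x : F, ω ^ (2*σ) * x = algebraMap (ZMod p) F (u₀ * u₀) * x := by
    intro x
    rw [map_mul, show 2*σ = σ + σ by ring, pow_add, hu₀]
  have hper : ∀ n, G (n + 2*σ) = G n := by
    intro n
    have e1 : ω ^ (n + 2*σ) = ω ^ (2*σ) * ω ^ n := by rw [pow_add, mul_comm]
    have e2 : ω ^ (n + 2*σ + d) = ω ^ (2*σ) * ω ^ (n + d) := by
      rw [← pow_add]; congr 1; omega
    simp only [hGdef, e1, e2, halg2, hT, auxT_algebraMap_mul]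
    rw [hFinv _ _ hsq hχsq, hGinv _ _ hsq hχsq]
  -- q copies
  set q : ℕ := (p - 1)/2 with hqdef
  have hqq : p - 1 = 2 * q := by
    have hodd := (Fact.out : p.Prime).odd_of_ne_two hp2
    obtain ⟨t, ht⟩ := hodd
    omega
  have hqN : q * (2*σ) = p ^ m - 1 := by rw [← hσ, hqq]; ring
  have hcopies : ∑ n ∈ range (p ^ m - 1), G n = q * ∑ n ∈ range (2*σ), G n := by
    rw [← hqN]; exact aux_periodic_sum hper q
  -- bijection to F \ {0}
  have hbij : ∑ n ∈ range (p ^ m - 1), G n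
      = ∑ x ∈ univ.erase (0:F), Fn (T x) * Gn (T (ω ^ d * x)) := by
    apply Finset.sum_bij (fun n _ => ω ^ n)
    · intro n _
      exact Finset.mem_erase.mpr ⟨pow_ne_zero _ hω0, mem_univ _⟩
    · intro n₁ hn₁ n₂ hn₂ hmeq
      have h1 : n₁ ∈ Set.Iio (orderOf ω) := by rw [hω]; exact mem_range.mp hn₁
      have h2 : n₂ ∈ Set.Iio (orderOf ω) := by rw [hω]; exact mem_range.mp hn₂
      exact pow_injOn_Iio_orderOf h1 h2 hmeq
    · intro x hx
      obtain ⟨n, hn, hx'⟩ := aux_dlog p m F hcard ω hω hm x (Finset.mem_erase.mp hx).1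
      exact ⟨n, mem_range.mpr hn, hx'⟩
    · intro n _
      rw [hGdef]
      simp only
      rw [pow_add, mul_comm (ω^n) (ω^d)]
  -- add back zero
  have hzero : Fn (T (0:F)) * Gn (T (ω ^ d * 0)) = -1 := by
    rw [mul_zero, map_zero, hFG0]
  have herase : ∑ x ∈ univ.erase (0:F), Fn (T x) * Gn (T (ω ^ d * x))
      = (∑ x : F, Fn (T x) * Gn (T (ω ^ d * x))) + 1 := by
    rw [← Finset.add_sum_erase _ (fun x => Fn (T x) * Gn (T (ω ^ d * x))) (mem_univ (0:F)),
      hzero]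
    ring
  set S : ℤ := ∑ x : F, Fn (T x) * Gn (T (ω ^ d * x)) with hSdef
  have hkey : ((p:ℤ) - 1) * ∑ j ∈ range (2*σ), G j = 2 * (S + 1) := by
    have : (2:ℤ) * (q * ∑ j ∈ range (2*σ), G j) = 2 * (S + 1) := by
      rw [← hcopies, hbij, herase]
    calc ((p:ℤ) - 1) * ∑ j ∈ range (2*σ), G j
        = 2 * ((q:ℤ) * ∑ j ∈ range (2*σ), G j) := by
          have : ((p:ℤ) - 1) = 2 * (q:ℤ) := by
            have := hqq
            have h1 : 1 ≤ p := by omega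
            push_cast [← Nat.cast_sub h1]
            exact_mod_cast congrArg (Nat.cast : ℕ → ℤ) hqq
          rw [this]; ring
      _ = 2 * (S + 1) := this
  -- now case split
  by_cases hd : σ ∣ d
  · obtain ⟨k, hk⟩ := id hd
    have hcval : ω ^ d = algebraMap (ZMod p) F (u₀ ^ k) := by
      rw [hk, pow_mul, hu₀.symm, map_pow]
    have hST : S = ∑ x : F, (fun a => Fn a * Gn ((u₀ ^ k) * a)) (T x) := by
      rw [hSdef]
      apply sum_congr rfl
      intro x _
      simp only
      rw [hcval, auxT_algebraMap_mul]
    have hfiber := aux_fiber_sum p F (ZMod p) (auxT p F) (auxT_surj p F)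
      (fun a => Fn a * Gn ((u₀ ^ k) * a))
    rw [← hT, ← hST] at hfiber
    have hu₀k : u₀ ^ k ≠ 0 := pow_ne_zero _ hu₀ne
    have hmixv := hmix (u₀ ^ k) hu₀k
    have hχk : quadraticChar (ZMod p) (u₀ ^ k) = (-1)^k := by
      rw [map_pow, hu₀χ]
    rw [ZMod.card, hcard] at hfiber
    -- S = p^(m-1) * (-1 + (p-1)*(-1)^k)
    have hSval : S = (p:ℤ)^(m-1) * (-1 + ((p:ℤ)-1) * (-1)^k) := by
      have hpm : ((p:ℤ))^m = (p:ℤ) * (p:ℤ)^(m-1) := by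
        rw [← pow_succ']
        congr 1
        omega
      apply mul_left_cancel₀ (show ((p:ℤ)) ≠ 0 by positivity)
      rw [hfiber, hmixv, hχk]
      push_cast
      rw [hpm]
      ring
    by_cases h2d : 2*σ ∣ d
    · have hkeven : (-1 : ℤ)^k = 1 := by
        obtain ⟨t, ht⟩ := h2d
        have : k = 2 * t := by
          have : σ * k = σ * (2*t) := by rw [← hk, ht]; ring
          exact Nat.eq_of_mul_eq_mul_left (by omega) this
        rw [this, pow_mul]; norm_num
      rw [if_pos h2d, hkey, hSval, hkeven]
      have hpm : ((p:ℤ))^m = (p:ℤ) * (p:ℤ)^(m-1) := by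
        rw [← pow_succ']; congr 1; omega
      rw [hpm]; ring
    · have hkodd : (-1 : ℤ)^k = -1 := by
        have hk2 : ¬ (2 ∣ k) := by
          intro ⟨t, ht⟩
          exact h2d ⟨t, by rw [hk, ht]; ring⟩
        obtain ⟨t, ht⟩ := Nat.odd_iff.mpr (Nat.two_dvd_ne_zero.mp hk2)
        rw [ht, pow_add, pow_mul]; norm_num
      rw [if_neg h2d, if_pos hd, hkey, hSval, hkodd]
      have hpm : ((p:ℤ))^m = (p:ℤ) * (p:ℤ)^(m-1) := by
        rw [← pow_succ']; congr 1; omega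
      rw [hpm]; ring
  · have h2d : ¬ 2*σ ∣ d := fun h => hd (dvd_trans ⟨2, by ring⟩ h)
    rw [if_neg h2d, if_neg hd]
    -- pair surjectivity
    have hnotmem := aux_pow_not_mem p m F ω hω hm σ hσ d hd
    set L := LinearMap.prod (auxT p F)
      ((auxT p F).comp (LinearMap.mulLeft (ZMod p) (ω ^ d))) with hL
    have hLsurj : Function.Surjective L := aux_pair_surj p F (ω ^ d) hnotmem
    have hfiber := aux_fiber_sum p F (ZMod p × ZMod p) L hLsurj
      (fun y => Fn y.1 * Gn y.2)
    have hST : S = ∑ x : F, (fun y : ZMod p × ZMod p => Fn y.1 * Gn y.2) (L x) := by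
      apply sum_congr rfl
      intro x _
      simp only [hL, LinearMap.prod_apply, Function.prod, LinearMap.comp_apply,
        LinearMap.mulLeft_apply]
      rfl
    rw [← hST] at hfiber
    have hcardV : (Fintype.card (ZMod p × ZMod p) : ℤ) = (p:ℤ)^2 := by
      rw [Fintype.card_prod, ZMod.card]; push_cast; ring
    have hsumV : ∑ y : ZMod p × ZMod p, Fn y.1 * Gn y.2 = -1 := by
      rw [Fintype.sum_prod_type]
      rw [← hsum, Finset.sum_mul_sum]
    rw [hcardV, hcard, hsumV] at hfiber
    have hSval : S = -(p:ℤ)^(m-2) := by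
      have hpm : ((p:ℤ))^m = (p:ℤ)^2 * (p:ℤ)^(m-2) := by
        rw [← pow_add]; congr 1; omega
      apply mul_left_cancel₀ (show ((p:ℤ))^2 ≠ 0 by positivity)
      rw [hfiber]
      push_cast
      rw [hpm]
      ring
    rw [hkey, hSval]
    ring

end PartG

open Finset

lemma aux_sub_one_dvd (P : ℤ) (k : ℕ) : (P - 1) ∣ P^k - 1 := by
  induction k with
  | zero => simp
  | succ n ih =>
    have h : P^(n+1) - 1 = P*(P^n - 1) + (P - 1) := by ring
    rw [h]
    exact dvd_add (Dvd.dvd.mul_left ih P) dvd_rfl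

lemma aux_interleave_even (t u : ℕ → ZMod 2) (e j : ℕ) :
    ntuInterleave t u e (2*j) = t j := by
  have h1 : 2*j % 2 = 0 := by omega
  have h2 : 2*j/2 = j := by omega
  simp [ntuInterleave, h1, h2]

lemma aux_interleave_odd (t u : ℕ → ZMod 2) (e j : ℕ) :
    ntuInterleave t u e (2*j+1) = u (j + e) := by
  have h1 : ¬ ((2*j+1) % 2 = 0) := by omega
  have h2 : (2*j+1)/2 = j := by omega
  simp [ntuInterleave, h1, h2]

theorem stmt8 (p m : ℕ) [Fact p.Prime] (hp2 : p ≠ 2) (hm : 1 < m)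
    (F : Type) [Field F] [Fintype F] [Algebra (ZMod p) F]
    (hcard : Fintype.card F = p ^ m) (ω : F) (hω : orderOf ω = p ^ m - 1)
    (N : ℕ) (hN : N = 2 * (p ^ m - 1) / (p - 1)) (N1 N2 : ℤ)
    (hN1 : N1 = -2 * (p : ℤ) ^ (m - 1) + 2 * ((p : ℤ) ^ (m - 1) - 1) / ((p : ℤ) - 1))
    (hN2 : N2 = 2 * ((p : ℤ) ^ (m - 2) - 1) / ((p : ℤ) - 1))
    (e : ℕ) (he : e < N) (hcond : 2 * (e : ℤ) ≡ 1 - ((N / 2 : ℕ) : ℤ) [ZMOD (N : ℤ)])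
    (τ0 : ℤ) (hτ0 : 0 ≤ τ0) (hτ1 : τ0 ≤ (N : ℤ) - 1) :
    pcorr (2 * N) (ntuInterleave (ntuT1 p ω) (ntuT2 p ω) e) (ntuInterleave (ntuT1 p ω) (ntuT2 p ω) e) (2 * τ0 + 1) =
      if τ0 ≡ -(e : ℤ) [ZMOD (N : ℤ)] ∨ τ0 ≡ (e : ℤ) - 1 [ZMOD (N : ℤ)] then
        -(N : ℤ) - N1
      else -2 * N2 := by
  classical
  have hp1 : 1 < p := (Fact.out : p.Prime).one_lt
  set σ : ℕ := ∑ i ∈ Finset.range m, p ^ i with hσdef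
  have hσ : (p - 1) * σ = p ^ m - 1 := aux_geom p (by omega) m
  have hMpos : 0 < p ^ m - 1 := aux_pm_pos p m hm
  have hσ1 : 1 ≤ σ := by
    rcases Nat.eq_zero_or_pos σ with h | h
    · rw [h, Nat.mul_zero] at hσ; omega
    · exact h
  have hNσ : N = 2 * σ := by
    rw [hN, show 2 * (p^m - 1) = (p-1) * (2*σ) by rw [← hσ]; ring,
      Nat.mul_div_cancel_left _ (by omega : 0 < p - 1)]
  have hNpos : 0 < N := by omega
  have hNhalf : N / 2 = σ := by rw [hNσ]; omega
  rw [hNhalf] at hcond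
  -- integer versions
  have hσz : ((p:ℤ) - 1) * (σ:ℤ) = (p:ℤ)^m - 1 := by
    have h := congrArg (Nat.cast : ℕ → ℤ) hσ
    push_cast [Nat.cast_sub hp1.le, Nat.cast_sub (Nat.one_le_pow m p (by omega))] at h
    exact h
  have hσzpos : 0 < (σ:ℤ) := by exact_mod_cast hσ1
  have hNz : (N:ℤ) = 2*(σ:ℤ) := by exact_mod_cast congrArg (Nat.cast : ℕ → ℤ) hNσ
  obtain ⟨c, hc⟩ : ((N:ℤ)) ∣ (1 - (σ:ℤ)) - 2*(e:ℤ) := Int.ModEq.dvd hcond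
  rw [hNz] at hc
  set t0 : ℕ := τ0.toNat with ht0
  have ht0z : (t0 : ℤ) = τ0 := Int.toNat_of_nonneg hτ0
  set s : ℕ → ZMod 2 := ntuInterleave (ntuT1 p ω) (ntuT2 p ω) e with hs
  -- periodicity helpers
  obtain ⟨u₀, hu₀, hu₀ne, hu₀χ⟩ := aux_u0 p m hp2 F ω hω hm σ hσ
  have hsqne : u₀*u₀ ≠ 0 := mul_ne_zero hu₀ne hu₀ne
  have hχsq : quadraticChar (ZMod p) (u₀*u₀) = 1 := by rw [map_mul, hu₀χ]; norm_num
  have homega : ∀ n : ℕ, ω ^ (n + N) = algebraMap (ZMod p) F (u₀*u₀) * ω ^ n := by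
    intro n
    rw [map_mul, hu₀, hNσ, show n + 2*σ = σ + (σ + n) by ring, pow_add, pow_add]
    ring
  have hfper : ∀ n, auxf p (auxT p F (ω ^ (n + N))) = auxf p (auxT p F (ω ^ n)) := by
    intro n
    rw [homega, auxT_algebraMap_mul, aux_f_inv p _ _ hsqne hχsq]
  have hgper : ∀ n, auxg p (auxT p F (ω ^ (n + N))) = auxg p (auxT p F (ω ^ n)) := by
    intro n
    rw [homega, auxT_algebraMap_mul, aux_g_inv p _ _ hsqne hχsq]
  -- Step 1: unfold pcorr and normalize indices
  set d₁ : ℕ := t0 + e with hd₁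
  set d₂ : ℕ := (N - e) + (t0 + 1) with hd₂
  have hpc : pcorr (2*N) s s (2*τ0+1)
      = (∑ j ∈ range N, auxf p (auxT p F (ω ^ j)) * auxg p (auxT p F (ω ^ (j + d₁))))
      + (∑ j ∈ range N, auxg p (auxT p F (ω ^ j)) * auxf p (auxT p F (ω ^ (j + d₂)))) := by
    have hidx : ∀ i : ℕ, ((((i : ℤ) + (2*τ0+1)) % (((2*N : ℕ)) : ℤ)).toNat)
        = (i + (2*t0+1)) % (2*N) := by
      intro i
      have h1 : ((i:ℤ) + (2*τ0+1)) = (((i + (2*t0+1) : ℕ)):ℤ) := by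
        push_cast [ht0z]; ring
      rw [h1, ← Int.natCast_mod, Int.toNat_natCast]
    have e0 : pcorr (2*N) s s (2*τ0+1)
        = ∑ i ∈ range (2*N), (-1:ℤ)^((s i + s ((i + (2*t0+1)) % (2*N))).val) := by
      rw [pcorr]
      exact sum_congr rfl (fun i _ => by rw [hidx i])
    rw [e0, aux_sum_even_odd _ N]
    have e1 : ∀ j ∈ range N,
        ((-1:ℤ)^((s (2*j) + s ((2*j + (2*t0+1)) % (2*N))).val)
          + (-1:ℤ)^((s (2*j+1) + s ((2*j+1 + (2*t0+1)) % (2*N))).val))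
        = auxf p (auxT p F (ω ^ j)) * auxg p (auxT p F (ω ^ (j + d₁)))
          + auxg p (auxT p F (ω ^ (j + e))) * auxf p (auxT p F (ω ^ (j + (t0 + 1)))) := by
      intro j _
      have hm1 : (2*j + (2*t0+1)) % (2*N) = 2*((j + t0) % N)+1 := by
        rw [show 2*j + (2*t0+1) = 2*(j+t0)+1 by ring, aux_mod1 _ _ hNpos]
      have hm2 : (2*j+1 + (2*t0+1)) % (2*N) = 2*((j + t0 + 1) % N) := by
        rw [show 2*j+1 + (2*t0+1) = 2*(j+t0+1) by ring, Nat.mul_mod_mul_left]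
      -- evaluate s
      have hs1 : s (2*j) = ntuT1 p ω j := aux_interleave_even _ _ _ _
      have hs2 : s (2*((j + t0) % N)+1) = ntuT2 p ω (((j+t0) % N) + e) :=
        aux_interleave_odd _ _ _ _
      have hs3 : s (2*j+1) = ntuT2 p ω (j + e) := aux_interleave_odd _ _ _ _
      have hs4 : s (2*((j + t0 + 1) % N)) = ntuT1 p ω ((j+t0+1) % N) :=
        aux_interleave_even _ _ _ _
      rw [hm1, hm2, hs1, hs2, hs3, hs4, aux_neg_one_pow_add, aux_neg_one_pow_add,
        aux_t1, aux_t2, aux_t2, aux_t1]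
      -- remove the mods via periodicity
      have hmod1 : auxg p (auxT p F (ω ^ (((j+t0) % N) + e)))
          = auxg p (auxT p F (ω ^ (j + d₁))) := by
        have hdm := Nat.div_add_mod (j+t0) N
        have hper := aux_periodic_mul (N := N)
          (G := fun n => auxg p (auxT p F (ω ^ n))) hgper ((j+t0)/N) (((j+t0) % N) + e)
        have harith : ((j+t0) % N) + e + ((j+t0)/N)*N = j + d₁ := by
          calc ((j+t0) % N) + e + ((j+t0)/N)*N
              = (N * ((j+t0)/N) + (j+t0) % N) + e := by ring
            _ = (j + t0) + e := by rw [hdm]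
            _ = j + d₁ := by rw [hd₁]; ring
        rw [← harith]
        exact hper.symm
      have hmod2 : auxf p (auxT p F (ω ^ ((j+t0+1) % N)))
          = auxf p (auxT p F (ω ^ (j + (t0+1)))) := by
        have hdm := Nat.div_add_mod (j+t0+1) N
        have hper := aux_periodic_mul (N := N)
          (G := fun n => auxf p (auxT p F (ω ^ n))) hfper ((j+t0+1)/N) ((j+t0+1) % N)
        have harith : ((j+t0+1) % N) + ((j+t0+1)/N)*N = j + (t0+1) := by
          calc ((j+t0+1) % N) + ((j+t0+1)/N)*N
              = N * ((j+t0+1)/N) + (j+t0+1) % N := by ring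
            _ = j+t0+1 := by rw [hdm]
            _ = j + (t0+1) := by ring
        rw [← harith]
        exact hper.symm
      rw [hmod1, hmod2]
    rw [sum_congr rfl e1, sum_add_distrib]
    congr 1
    -- shift the second sum by N - e
    have hHper : ∀ n, (fun j => auxg p (auxT p F (ω ^ (j + e)))
        * auxf p (auxT p F (ω ^ (j + (t0+1))))) (n + N)
        = (fun j => auxg p (auxT p F (ω ^ (j + e)))
        * auxf p (auxT p F (ω ^ (j + (t0+1))))) n := by
      intro n
      simp only
      rw [show n + N + e = (n + e) + N by ring, show n + N + (t0+1) = (n + (t0+1)) + N by ring,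
        hgper, hfper]
    have hshift := aux_sum_shift (G := fun j => auxg p (auxT p F (ω ^ (j + e)))
        * auxf p (auxT p F (ω ^ (j + (t0+1))))) (N := N) hHper (N - e)
    rw [← hshift]
    apply sum_congr rfl
    intro j _
    have ha1 : j + (N-e) + e = j + N := by omega
    have ha2 : j + (N-e) + (t0+1) = j + d₂ := by rw [hd₂]; omega
    rw [ha1, ha2, hgper]
  -- Step 2: evaluate the two correlation sums
  have mkcorrA := aux_corr p m hp2 F hcard ω hω hm σ hσ (auxf p) (auxg p)
    (aux_f0g0 p)
    (by rw [aux_sum_f p hp2, aux_sum_g p hp2]; norm_num)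
    (fun u hu => aux_mix p (auxf p) (auxg p) (aux_f_ne p) (aux_g_ne p) (aux_f0g0 p) u hu)
    (aux_f_inv p) (aux_g_inv p) d₁
  have mkcorrB := aux_corr p m hp2 F hcard ω hω hm σ hσ (auxg p) (auxf p)
    (aux_g0f0 p)
    (by rw [aux_sum_f p hp2, aux_sum_g p hp2]; norm_num)
    (fun u hu => aux_mix p (auxg p) (auxf p) (aux_g_ne p) (aux_f_ne p) (aux_g0f0 p) u hu)
    (aux_g_inv p) (aux_f_inv p) d₂
  rw [← hNσ] at mkcorrA mkcorrB
  -- abbreviations for the values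
  have hkey : ((p:ℤ) - 1) * pcorr (2*N) s s (2*τ0+1)
      = (if N ∣ d₁ then 2*(p:ℤ)^m - 4*(p:ℤ)^(m-1) + 2
          else if σ ∣ d₁ then 2 - 2*(p:ℤ)^m else 2 - 2*(p:ℤ)^(m-2))
      + (if N ∣ d₂ then 2*(p:ℤ)^m - 4*(p:ℤ)^(m-1) + 2
          else if σ ∣ d₂ then 2 - 2*(p:ℤ)^m else 2 - 2*(p:ℤ)^(m-2)) := by
    rw [hpc, mul_add, mkcorrA, mkcorrB]
  -- integer value identities
  have hpne : ((p:ℤ) - 1) ≠ 0 := by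
    have : (2:ℤ) ≤ (p:ℤ) := by exact_mod_cast hp1
    omega
  have hpm1 : (p:ℤ)^m = (p:ℤ) * (p:ℤ)^(m-1) := by
    rw [← pow_succ']; congr 1; omega
  have hpm2 : (p:ℤ)^(m-1) = (p:ℤ) * (p:ℤ)^(m-2) := by
    rw [← pow_succ']; congr 1; omega
  have hD1 : ((p:ℤ)-1) * (2*((p:ℤ)^(m-1) - 1) / ((p:ℤ)-1)) = 2*((p:ℤ)^(m-1) - 1) :=
    Int.mul_ediv_cancel' (Dvd.dvd.mul_left (aux_sub_one_dvd (p:ℤ) (m-1)) 2)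
  have hD2 : ((p:ℤ)-1) * (2*((p:ℤ)^(m-2) - 1) / ((p:ℤ)-1)) = 2*((p:ℤ)^(m-2) - 1) :=
    Int.mul_ediv_cancel' (Dvd.dvd.mul_left (aux_sub_one_dvd (p:ℤ) (m-2)) 2)
  have hval1 : ((p:ℤ) - 1) * (-(N:ℤ) - N1) = 4 - 4*(p:ℤ)^(m-1) := by
    rw [hN1, hNz]
    linear_combination (-2 : ℤ)*hσz - hD1 - 2*hpm1
  have hval2 : ((p:ℤ) - 1) * (-2*N2) = 4 - 4*(p:ℤ)^(m-2) := by
    rw [hN2]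
    linear_combination (-2 : ℤ)*hD2
  -- cast facts about d₁, d₂
  have hd1z : ((d₁ : ℕ) : ℤ) = τ0 + (e:ℤ) := by rw [hd₁]; push_cast [ht0z]; ring
  have hd2z : ((d₂ : ℕ) : ℤ) = (N:ℤ) - (e:ℤ) + τ0 + 1 := by
    rw [hd₂]; push_cast [Nat.cast_sub he.le, ht0z]; ring
  have hdvd_iff : ∀ (a b : ℕ), (a ∣ b) ↔ ((a:ℤ) ∣ (b:ℤ)) := fun a b =>
    (Int.natCast_dvd_natCast).symm
  -- final case analysis
  apply mul_left_cancel₀ hpne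
  rw [hkey]
  by_cases hc1 : τ0 ≡ -(e : ℤ) [ZMOD (N : ℤ)]
  · obtain ⟨k, hk⟩ := Int.ModEq.dvd hc1
    rw [hNz] at hk
    have hA1 : N ∣ d₁ := by
      rw [hdvd_iff, hd1z, hNz]
      exact ⟨-k, by linear_combination -hk⟩
    have hd2val : ((d₂:ℕ):ℤ) = (σ:ℤ) * (1 + 2*(1 - k + c)) := by
      rw [hd2z, hNz]
      linear_combination (-1 : ℤ)*hk + hc
    have hB1σ : σ ∣ d₂ := by
      rw [hdvd_iff, hd2val]
      exact ⟨1 + 2*(1 - k + c), rfl⟩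
    have hB1N : ¬ (N ∣ d₂) := by
      intro hcon
      rw [hdvd_iff, hNz] at hcon
      obtain ⟨t, ht⟩ := hcon
      rw [hd2val] at ht
      have : (σ:ℤ) * (1 + 2*(1 - k + c)) = (σ:ℤ) * (2*t) := by linear_combination ht
      have := mul_left_cancel₀ (by omega : (σ:ℤ) ≠ 0) this
      omega
    rw [if_pos hA1, if_neg hB1N, if_pos hB1σ, if_pos (Or.inl hc1), hval1, hpm1]
    ring
  · by_cases hc2 : τ0 ≡ (e : ℤ) - 1 [ZMOD (N : ℤ)]
    · obtain ⟨k, hk⟩ := Int.ModEq.dvd hc2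
      rw [hNz] at hk
      have hB2 : N ∣ d₂ := by
        rw [hdvd_iff, hd2z]
        rw [hNz]
        exact ⟨1 - k, by linear_combination -hk⟩
      have hd1val : ((d₁:ℕ):ℤ) = (σ:ℤ) * (-1 - 2*(c + k)) := by
        rw [hd1z]
        linear_combination (-1:ℤ)*hc - hk
      have hA2σ : σ ∣ d₁ := by
        rw [hdvd_iff, hd1val]
        exact ⟨-1 - 2*(c + k), rfl⟩
      have hA2N : ¬ (N ∣ d₁) := by
        intro hcon
        rw [hdvd_iff, hNz] at hcon
        obtain ⟨t, ht⟩ := hcon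
        rw [hd1val] at ht
        have : (σ:ℤ) * (-1 - 2*(c + k)) = (σ:ℤ) * (2*t) := by linear_combination ht
        have := mul_left_cancel₀ (by omega : (σ:ℤ) ≠ 0) this
        omega
      rw [if_neg hA2N, if_pos hA2σ, if_pos hB2, if_pos (Or.inr hc2), hval1, hpm1]
      ring
    · have hA3 : ¬ (σ ∣ d₁) := by
        intro hcon
        rw [hdvd_iff] at hcon
        obtain ⟨j, hj⟩ := hcon
        rw [hd1z] at hj
        rcases Int.even_or_odd j with ⟨t, ht⟩ | ⟨t, ht⟩
        · apply hc1
          apply Int.modEq_iff_dvd.mpr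
          rw [hNz]
          exact ⟨-t, by rw [ht] at hj; linear_combination -hj⟩
        · apply hc2
          apply Int.modEq_iff_dvd.mpr
          rw [hNz]
          exact ⟨-1 - c - t, by rw [ht] at hj; linear_combination -hj - hc⟩
      have hB3 : ¬ (σ ∣ d₂) := by
        intro hcon
        rw [hdvd_iff] at hcon
        obtain ⟨j, hj⟩ := hcon
        rw [hd2z, hNz] at hj
        rcases Int.even_or_odd j with ⟨t, ht⟩ | ⟨t, ht⟩
        · apply hc2
          apply Int.modEq_iff_dvd.mpr
          rw [hNz]
          exact ⟨1 - t, by rw [ht] at hj; linear_combination -hj⟩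
        · apply hc1
          apply Int.modEq_iff_dvd.mpr
          rw [hNz]
          exact ⟨1 + c - t, by rw [ht] at hj; linear_combination -hj + hc⟩
      have hσN : σ ∣ N := ⟨2, by rw [hNσ]; ring⟩
      have hA3' : ¬ (N ∣ d₁) := fun h => hA3 (dvd_trans hσN h)
      have hB3' : ¬ (N ∣ d₂) := fun h => hB3 (dvd_trans hσN h)
      rw [if_neg hA3', if_neg hA3, if_neg hB3', if_neg hB3,
        if_neg (by push_neg; exact ⟨hc1, hc2⟩), hval2]
      ring
end

section
/- For each e ∈ {0, 1, …, N−1}, the interleaved sequence S^e has the balance property: the number of indices n with 0 ≤ n ≤ 2N−1 and s^e_n = 0 equals N, and the number of indices n with 0 ≤ n ≤ 2N−1 and s^e_n = 1 equals N. -/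
open Polynomial in
lemma frob_fixed_mem (p : ℕ) [Fact p.Prime] (F : Type) [Field F] [Fintype F]
    [Algebra (ZMod p) F] (x : F) (hx : x ^ p = x) :
    ∃ a : ZMod p, algebraMap (ZMod p) F a = x := by
  have hp := Fact.out (p := p.Prime)
  classical
  set S : Finset F := (Finset.univ : Finset (ZMod p)).image (algebraMap (ZMod p) F) with hS
  have hne : (X ^ p - X : F[X]) ≠ 0 := FiniteField.X_pow_card_sub_X_ne_zero F hp.one_lt
  set T : Finset F := (X ^ p - X : F[X]).roots.toFinset with hT
  have hsub : S ⊆ T := by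
    intro y hy
    simp only [hS, Finset.mem_image] at hy
    obtain ⟨a, -, rfl⟩ := hy
    simp only [hT, Multiset.mem_toFinset, mem_roots hne, IsRoot.def, eval_sub, eval_pow, eval_X]
    rw [← map_pow, ZMod.pow_card, sub_self]
  have hTcard : T.card ≤ p := by
    calc T.card ≤ Multiset.card (X ^ p - X : F[X]).roots := Multiset.toFinset_card_le _
    _ ≤ (X ^ p - X : F[X]).natDegree := card_roots' _
    _ = p := FiniteField.X_pow_card_sub_X_natDegree_eq F hp.one_lt
  have hScard : S.card = p := by
    rw [hS, Finset.card_image_of_injective _ (algebraMap (ZMod p) F).injective,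
      Finset.card_univ, ZMod.card]
  have hST : S = T := Finset.eq_of_subset_of_card_le hsub (by omega)
  have hxT : x ∈ T := by
    simp only [hT, Multiset.mem_toFinset, mem_roots hne, IsRoot.def, eval_sub, eval_pow, eval_X]
    rw [hx, sub_self]
  rw [← hST] at hxT
  simpa [hS, Finset.mem_image, eq_comm] using hxT


lemma leg_val (p : ℕ) [Fact p.Prime] (x : ZMod p) :
    legendreSym p ((x.val : ℕ) : ℤ) = quadraticChar (ZMod p) x := by
  rw [legendreSym]
  norm_cast
  rw [ZMod.natCast_val, ZMod.cast_id]

theorem stmt10 (p m : ℕ) [Fact p.Prime] (hp2 : p ≠ 2) (hm : 1 < m)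
    (F : Type) [Field F] [Fintype F] [Algebra (ZMod p) F]
    (hcard : Fintype.card F = p ^ m) (ω : F) (hω : orderOf ω = p ^ m - 1)
    (N : ℕ) (hN : N = 2 * (p ^ m - 1) / (p - 1)) (e : ℕ) (he : e < N) :
    ((Finset.range (2 * N)).filter (fun n => ntuInterleave (ntuT1 p ω) (ntuT2 p ω) e n = 0)).card = N
    ∧ ((Finset.range (2 * N)).filter (fun n => ntuInterleave (ntuT1 p ω) (ntuT2 p ω) e n = 1)).card = N := by
  classical
  have hp := Fact.out (p := p.Prime)
  have hp3 : 3 ≤ p := by have := hp.two_le; omega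
  have hq1 : 1 < p ^ m := Nat.one_lt_pow (by omega) (by omega)
  set K := (p ^ m - 1) / (p - 1) with hK
  have hdvd : (p - 1) ∣ (p ^ m - 1) := by
    simpa using Nat.sub_dvd_pow_sub_pow p 1 m
  have hKm : K * (p - 1) = p ^ m - 1 := Nat.div_mul_cancel hdvd
  have hN2K : N = 2 * K := by
    rw [hN, Nat.mul_div_assoc 2 hdvd]
  have hK0 : 0 < K := by
    rcases Nat.eq_zero_or_pos K with h | h
    · rw [h] at hKm; omega
    · exact h
  have hN0 : 0 < N := by omega
  -- the element a of ZMod p corresponding to ω^K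
  have hω1 : ω ^ (p ^ m - 1) = 1 := by rw [← hω]; exact pow_orderOf_eq_one ω
  set c := ω ^ K with hc
  have hc1 : c ^ (p - 1) = 1 := by rw [hc, ← pow_mul, hKm, hω1]
  have hcp : c ^ p = c := by
    have h1 : c ^ p = c ^ (p - 1) * c := by rw [← pow_succ]; congr 1; omega
    rw [h1, hc1, one_mul]
  obtain ⟨a, ha⟩ := frob_fixed_mem p F c hcp
  have hcne : c ≠ 0 := by
    intro h
    rw [h, zero_pow (by omega)] at hc1
    exact zero_ne_one hc1
  have hane : a ≠ 0 := by
    rintro rfl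
    rw [map_zero] at ha
    exact hcne ha.symm
  have hdvd' : K ∣ p ^ m - 1 := ⟨p - 1, hKm.symm⟩
  have hordc : orderOf c = p - 1 := by
    rw [hc, orderOf_pow' ω (by omega : K ≠ 0), hω, Nat.gcd_eq_right hdvd', ← hKm,
      Nat.mul_div_cancel_left _ hK0]
  have horda : orderOf a = p - 1 := by
    rw [← hordc, ← ha]
    exact (orderOf_injective (algebraMap (ZMod p) F).toMonoidHom
      (algebraMap (ZMod p) F).injective a).symm
  have hpodd : p % 2 = 1 := Nat.odd_iff.mp (hp.odd_of_ne_two hp2)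
  have hχa : quadraticChar (ZMod p) a = -1 := by
    rw [quadraticChar_neg_one_iff_not_isSquare]
    rintro ⟨b, rfl⟩
    have hb : b ≠ 0 := by rintro rfl; simp at hane
    have hb1 : (b * b) ^ ((p - 1) / 2) = 1 := by
      have h2 : 2 * ((p - 1) / 2) = p - 1 := by omega
      rw [← sq, ← pow_mul, h2, ZMod.pow_card_sub_one_eq_one hb]
    have h3 := orderOf_dvd_of_pow_eq_one hb1
    rw [horda] at h3
    have h4 := Nat.le_of_dvd (by omega) h3
    omega
  -- the character sequence
  set g : ℕ → ℤ := fun n => quadraticChar (ZMod p) (Algebra.trace (ZMod p) F (ω ^ n)) with hg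
  have hgK : ∀ n, g (n + K) = - g n := by
    intro n
    have h1 : ω ^ (n + K) = a • ω ^ n := by
      rw [pow_add, Algebra.smul_def, ha, mul_comm]
    simp only [hg, h1, map_smul, smul_eq_mul, map_mul, hχa]
    ring
  have hgN : ∀ n, g (n + N) = g n := by
    intro n
    rw [hN2K, show n + 2 * K = n + K + K by ring, hgK, hgK, neg_neg]
  have hgmod : ∀ n, g (n % N) = g n := by
    have haux : ∀ k r, g (r + N * k) = g r := by
      intro k
      induction k with
      | zero => simp
      | succ k ih =>
        intro r
        rw [show r + N * (k + 1) = (r + N * k) + N by ring, hgN, ih]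
    intro n
    conv_rhs => rw [← Nat.div_add_mod n N]
    rw [show N * (n / N) + n % N = n % N + N * (n / N) by ring, haux]
  -- descriptions of t1 and t2
  have ht1 : ∀ n, (ntuT1 p ω n = 1 ↔ g n = -1) ∧ (ntuT1 p ω n = 0 ↔ ¬ g n = -1) := by
    intro n
    unfold ntuT1
    rw [leg_val]
    constructor <;> split <;> simp_all
  have ht2 : ∀ n, (ntuT2 p ω n = 0 ↔ g n = 1) ∧ (ntuT2 p ω n = 1 ↔ ¬ g n = 1) := by
    intro n
    unfold ntuT2
    rw [leg_val]
    constructor <;> split <;> simp_all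
  -- the involution σ and shifted versions
  set σ : ℕ → ℕ := fun j => if j % N < K then j % N + K else j % N - K with hσ
  have hσlt : ∀ j, σ j < N := by
    intro j
    have h1 : j % N < N := Nat.mod_lt _ hN0
    simp only [hσ]
    split <;> omega
  have hσσ : ∀ j, j < N → σ (σ j) = j := by
    intro j hj
    have h1 : j % N = j := Nat.mod_eq_of_lt hj
    simp only [hσ, h1]
    by_cases h2 : j < K
    · rw [if_pos h2]
      have h3 : (j + K) % N = j + K := Nat.mod_eq_of_lt (by omega)
      rw [h3, if_neg (by omega)]
      omega
    · rw [if_neg h2]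
      have h3 : (j - K) % N = j - K := Nat.mod_eq_of_lt (by omega)
      rw [h3, if_pos (by omega)]
      omega
  have hσg : ∀ j, g (σ j) = - g j := by
    intro j
    have hgj : g (j % N) = g j := hgmod j
    simp only [hσ]
    split
    · rw [hgK (j % N)]; rw [hgj]
    · rename_i h2
      have h3 : j % N - K + K = j % N := by omega
      have h4 := hgK (j % N - K)
      rw [h3] at h4
      linarith
  set φ : ℕ → ℕ := fun j => (σ j + (N - e % N)) % N with hφ
  set φ' : ℕ → ℕ := fun j => σ ((j + e) % N) with hφ'
  have hmodkey : ∀ x, ((x + (N - e % N)) % N + e) % N = x % N := by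
    intro x
    rw [Nat.mod_add_mod]
    have h2 := Nat.div_add_mod e N
    have h3 : e % N < N := Nat.mod_lt _ hN0
    have h5 : N * (e / N + 1) = N * (e / N) + N := by ring
    have h1 : x + (N - e % N) + e = x + N * (e / N + 1) := by omega
    rw [h1, Nat.add_mul_mod_self_left]
  have hφlt : ∀ j, φ j < N := fun j => Nat.mod_lt _ hN0
  have hφ'lt : ∀ j, φ' j < N := fun j => hσlt _
  have hφe : ∀ j, (φ j + e) % N = σ j := by
    intro j
    simp only [hφ]
    rw [hmodkey (σ j), Nat.mod_eq_of_lt (hσlt j)]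
  have hgφ : ∀ j, g (φ j + e) = - g j := by
    intro j
    rw [← hgmod (φ j + e), hφe j, hσg]
  have hgφ' : ∀ j, g (φ' j) = - g (j + e) := by
    intro j
    simp only [hφ']
    rw [hσg, hgmod]
  have hφ'φ : ∀ j, j < N → φ' (φ j) = j := by
    intro j hj
    simp only [hφ']
    rw [hφe j, hσσ j hj]
  have hφφ' : ∀ j, j < N → φ (φ' j) = j := by
    intro j hj
    simp only [hφ, hφ']
    rw [hσσ ((j + e) % N) (Nat.mod_lt _ hN0)]
    rw [Nat.mod_add_mod]
    have h2 := Nat.div_add_mod e N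
    have h3 : e % N < N := Nat.mod_lt _ hN0
    have h5 : N * (e / N + 1) = N * (e / N) + N := by ring
    have h1 : j + e + (N - e % N) = j + N * (e / N + 1) := by omega
    rw [h1, Nat.add_mul_mod_self_left, Nat.mod_eq_of_lt hj]
  -- key equivalences between t1 and t2
  have key1 : ∀ j, (ntuT1 p ω j = 1 ↔ ntuT2 p ω (φ j + e) = 0) := by
    intro j
    rw [(ht1 j).1, (ht2 (φ j + e)).1, hgφ j]
    omega
  have key1' : ∀ j, (ntuT1 p ω j = 0 ↔ ntuT2 p ω (φ j + e) = 1) := by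
    intro j
    rw [(ht1 j).2, (ht2 (φ j + e)).2, hgφ j]
    omega
  have key2 : ∀ j, (ntuT2 p ω (j + e) = 1 ↔ ntuT1 p ω (φ' j) = 0) := by
    intro j
    rw [(ht1 (φ' j)).2, (ht2 (j + e)).2, hgφ' j]
    omega
  have key2' : ∀ j, (ntuT2 p ω (j + e) = 0 ↔ ntuT1 p ω (φ' j) = 1) := by
    intro j
    rw [(ht1 (φ' j)).1, (ht2 (j + e)).1, hgφ' j]
    omega
  -- the interleaved sequence and the bijection
  set s : ℕ → ZMod 2 := ntuInterleave (ntuT1 p ω) (ntuT2 p ω) e with hs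
  have hseven : ∀ n, n % 2 = 0 → s n = ntuT1 p ω (n / 2) := by
    intro n h
    simp only [hs, ntuInterleave, if_pos h]
  have hsodd : ∀ n, n % 2 = 1 → s n = ntuT2 p ω (n / 2 + e) := by
    intro n h
    simp only [hs, ntuInterleave]
    rw [if_neg (by omega)]
  set Φ : ℕ → ℕ := fun n => if n % 2 = 0 then 2 * φ (n / 2) + 1 else 2 * φ' (n / 2) with hΦ
  have hΦeven : ∀ n, n % 2 = 0 → Φ n = 2 * φ (n / 2) + 1 := by
    intro n h
    simp only [hΦ, if_pos h]
  have hΦodd : ∀ n, n % 2 = 1 → Φ n = 2 * φ' (n / 2) := by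
    intro n h
    simp only [hΦ]
    rw [if_neg (by omega)]
  have hmem : ∀ v w : ZMod 2,
      (∀ j, (ntuT1 p ω j = v ↔ ntuT2 p ω (φ j + e) = w)) →
      (∀ j, (ntuT2 p ω (j + e) = v ↔ ntuT1 p ω (φ' j) = w)) →
      ∀ n ∈ (Finset.range (2 * N)).filter (fun n => s n = v),
        Φ n ∈ (Finset.range (2 * N)).filter (fun n => s n = w) := by
    intro v w hk1 hk2 n hn
    rw [Finset.mem_filter, Finset.mem_range] at hn ⊢
    obtain ⟨h2N, hv⟩ := hn
    rcases Nat.mod_two_eq_zero_or_one n with hpar | hpar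
    · rw [hΦeven n hpar]
      refine ⟨by have := hφlt (n / 2); omega, ?_⟩
      rw [hsodd _ (by omega), show (2 * φ (n / 2) + 1) / 2 = φ (n / 2) by omega]
      exact (hk1 (n / 2)).mp (by rwa [hseven n hpar] at hv)
    · rw [hΦodd n hpar]
      refine ⟨by have := hφ'lt (n / 2); omega, ?_⟩
      rw [hseven _ (by omega), show (2 * φ' (n / 2)) / 2 = φ' (n / 2) by omega]
      exact (hk2 (n / 2)).mp (by rwa [hsodd n hpar] at hv)
  have hinv : ∀ n, n < 2 * N → Φ (Φ n) = n := by
    intro n h2N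
    have hn2 : n / 2 < N := by omega
    rcases Nat.mod_two_eq_zero_or_one n with hpar | hpar
    · rw [hΦeven n hpar, hΦodd _ (by omega),
        show (2 * φ (n / 2) + 1) / 2 = φ (n / 2) by omega, hφ'φ _ hn2]
      omega
    · rw [hΦodd n hpar, hΦeven _ (by omega),
        show (2 * φ' (n / 2)) / 2 = φ' (n / 2) by omega, hφφ' _ hn2]
      omega
  have hcardeq : ((Finset.range (2 * N)).filter (fun n => s n = 1)).card
      = ((Finset.range (2 * N)).filter (fun n => s n = 0)).card := by
    refine Finset.card_nbij' Φ Φ (hmem 1 0 key1 key2) (hmem 0 1 key1' key2') ?_ ?_ <;>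
    · intro n hn
      rw [Finset.mem_coe, Finset.mem_filter, Finset.mem_range] at hn
      exact hinv n hn.1
  have hfilt : (Finset.range (2 * N)).filter (fun n => ¬ s n = 0)
      = (Finset.range (2 * N)).filter (fun n => s n = 1) := by
    apply Finset.filter_congr
    intro n _
    have hzm : ∀ x : ZMod 2, ¬ x = 0 ↔ x = 1 := by decide
    exact hzm (s n)
  have hsum := Finset.card_filter_add_card_filter_not
    (s := Finset.range (2 * N)) (p := fun n => s n = 0)
  rw [hfilt, Finset.card_range] at hsum
  constructor <;> omega
end

section
/- Let e1, e2 ∈ {0, 1, …, N−1} with e1 < e2, and suppose e1 + e2 ≢ 1 (mod N) and e1 + e2 ≢ 1 − N/2 (mod N). For every odd shift τ = 2τ0 + 1 with 0 ≤ τ0 ≤ N−1, the periodic cross-correlation of S^{e1} and S^{e2} satisfies: R_{S^{e1},S^{e2}}(2τ0+1) = −N − N2 if τ0 ≡ −e2 − N/2 or τ0 ≡ e1 − 1 + N/2 (mod N); R_{S^{e1},S^{e2}}(2τ0+1) = −N1 − N2 if τ0 ≡ −e2 or τ0 ≡ e1 − 1 (mod N); and R_{S^{e1},S^{e2}}(2τ0+1)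 = −2N2 otherwise. -/
noncomputable def ntuChi (p : ℕ) [Fact p.Prime] {F : Type} [Field F]
    [Algebra (ZMod p) F] (ω : F) (n : ℕ) : ℤ :=
  quadraticChar (ZMod p) (Algebra.trace (ZMod p) F (ω ^ n))

noncomputable def ntuZ (p : ℕ) [Fact p.Prime] {F : Type} [Field F]
    [Algebra (ZMod p) F] (ω : F) (n : ℕ) : ℤ :=
  if Algebra.trace (ZMod p) F (ω ^ n) = 0 then 1 else 0

lemma ntu_legendre_val (p : ℕ) [Fact p.Prime] (x : ZMod p) :
    legendreSym p ((x.val : ℤ)) = quadraticChar (ZMod p) x := by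
  unfold legendreSym
  congr 1
  push_cast
  simp [ZMod.natCast_val, ZMod.cast_id]

lemma ntuT1_eq (p : ℕ) [Fact p.Prime] {F : Type} [Field F]
    [Algebra (ZMod p) F] (ω : F) (n : ℕ) :
    ntuT1 p ω n = if ntuChi p ω n = -1 then 1 else 0 := by
  rw [ntuT1, ntuChi, ntu_legendre_val]

lemma ntuT2_eq (p : ℕ) [Fact p.Prime] {F : Type} [Field F]
    [Algebra (ZMod p) F] (ω : F) (n : ℕ) :
    ntuT2 p ω n = if ntuChi p ω n = 1 then 0 else 1 := by
  rw [ntuT2, ntuChi, ntu_legendre_val]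

lemma ntuT1_pow (p : ℕ) [Fact p.Prime] {F : Type} [Field F]
    [Algebra (ZMod p) F] (ω : F) (n : ℕ) :
    (-1 : ℤ) ^ (ntuT1 p ω n).val = ntuChi p ω n + ntuZ p ω n := by
  rw [ntuT1_eq, ntuZ, ntuChi]
  by_cases h0 : Algebra.trace (ZMod p) F (ω ^ n) = 0
  · simp [h0, quadraticChar_zero, ZMod.val_one]
  · rcases quadraticChar_dichotomy h0 with h | h <;> simp [h0, h, ZMod.val_one]

lemma ntuT2_pow (p : ℕ) [Fact p.Prime] {F : Type} [Field F]
    [Algebra (ZMod p) F] (ω : F) (n : ℕ) :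
    (-1 : ℤ) ^ (ntuT2 p ω n).val = ntuChi p ω n - ntuZ p ω n := by
  rw [ntuT2_eq, ntuZ, ntuChi]
  by_cases h0 : Algebra.trace (ZMod p) F (ω ^ n) = 0
  · simp [h0, quadraticChar_zero, ZMod.val_one]
  · rcases quadraticChar_dichotomy h0 with h | h <;> simp [h0, h, ZMod.val_one]



-- generic helper lemmas
lemma ntu_neg_one_pow_add (a b : ZMod 2) :
    (-1 : ℤ) ^ ((a + b).val) = (-1 : ℤ) ^ a.val * (-1 : ℤ) ^ b.val := by
  revert a b; decide

lemma ntu_sum_shift_one (N : ℕ) (g : ℕ → ℤ) (hg : ∀ n, g (n + N) = g n) :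
    ∑ j ∈ Finset.range N, g (j + 1) = ∑ j ∈ Finset.range N, g j := by
  rcases Nat.eq_zero_or_pos N with h | h
  · simp [h]
  · have h1 : ∑ j ∈ Finset.range N, g (j + 1) = ∑ j ∈ Finset.Ico 1 (N + 1), g j := by
      rw [Finset.sum_Ico_eq_sum_range]
      simp only [Nat.add_sub_cancel]
      apply Finset.sum_congr rfl; intro j _; rw [add_comm]
    have h2 : ∑ j ∈ Finset.Ico 1 (N + 1), g j = (∑ j ∈ Finset.Ico 1 N, g j) + g N := by
      rw [Finset.sum_Ico_succ_top h]
    have h3 : ∑ j ∈ Finset.range N, g j = g 0 + ∑ j ∈ Finset.Ico 1 N, g j := by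
      rw [Finset.range_eq_Ico, ← Finset.sum_eq_sum_Ico_succ_bot h]
    have h4 : g N = g 0 := by simpa using hg 0
    omega

lemma ntu_sum_shift (N : ℕ) (g : ℕ → ℤ) (hg : ∀ n, g (n + N) = g n) (c : ℕ) :
    ∑ j ∈ Finset.range N, g (j + c) = ∑ j ∈ Finset.range N, g j := by
  induction c with
  | zero => simp
  | succ c ih =>
    have : ∑ j ∈ Finset.range N, g (j + (c + 1)) = ∑ j ∈ Finset.range N, (fun n => g (n + c)) (j + 1) := by
      apply Finset.sum_congr rfl; intro j _; ring_nf
    rw [this, ntu_sum_shift_one N (fun n => g (n + c)) (fun n => by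
      have := hg (n + c); simpa [add_assoc, add_comm, add_left_comm] using this)]
    exact ih

lemma ntu_sum_two_blocks (N : ℕ) (g : ℕ → ℤ) :
    ∑ j ∈ Finset.range (2 * N), g j
      = ∑ j ∈ Finset.range N, g j + ∑ j ∈ Finset.range N, g (j + N) := by
  rw [two_mul, Finset.sum_range_add]
  simp [add_comm]

lemma ntu_sum_blocks (N k : ℕ) (g : ℕ → ℤ) (hg : ∀ n, g (n + N) = g n) :
    ∑ j ∈ Finset.range (k * N), g j = k * ∑ j ∈ Finset.range N, g j := by
  induction k with
  | zero => simp
  | succ k ih =>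
    rw [Nat.succ_mul, Finset.sum_range_add, ih]
    have : ∑ j ∈ Finset.range N, g (k * N + j) = ∑ j ∈ Finset.range N, g j := by
      have := ntu_sum_shift N g hg (k * N)
      simpa [add_comm] using this
    rw [this]; push_cast; ring

lemma ntu_sum_even_odd (N : ℕ) (g : ℕ → ℤ) :
    ∑ i ∈ Finset.range (2 * N), g i
      = ∑ j ∈ Finset.range N, g (2 * j) + ∑ j ∈ Finset.range N, g (2 * j + 1) := by
  induction N with
  | zero => simp
  | succ n ih =>
    rw [Nat.mul_succ, Finset.sum_range_succ, Finset.sum_range_succ, Finset.sum_range_succ (f := fun j => g (2*j+1)),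
      ih, Finset.sum_range_succ (f := fun j => g (2*j))]
    ring


-- frobenius-fixed elements lie in the prime field
lemma ntu_mem_algebraMap (p : ℕ) [hp : Fact p.Prime] {F : Type} [Field F]
    [Algebra (ZMod p) F] (x : F) (hx : x ^ p = x) :
    ∃ u : ZMod p, algebraMap (ZMod p) F u = x := by
  classical
  have hinj : Function.Injective (algebraMap (ZMod p) F) := (algebraMap (ZMod p) F).injective
  set f : Polynomial F := Polynomial.X ^ p - Polynomial.X with hf
  have hp1 : 1 < p := hp.out.one_lt
  have hdeg : f.natDegree = p := by
    rw [hf]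
    compute_degree
    · rw [if_neg (by omega)]; norm_num
    · omega
  have hf0 : f ≠ 0 := by
    intro h
    rw [h] at hdeg
    simp at hdeg
    omega
  have hroot : ∀ y : F, y ^ p = y → y ∈ f.roots.toFinset := by
    intro y hy
    rw [Multiset.mem_toFinset, Polynomial.mem_roots hf0]
    simp [hf, Polynomial.IsRoot, sub_eq_zero, hy]
  have himg : (Finset.univ.image (algebraMap (ZMod p) F)) ⊆ f.roots.toFinset := by
    intro y hy
    rcases Finset.mem_image.mp hy with ⟨u, _, rfl⟩
    apply hroot
    rw [← map_pow, ZMod.pow_card]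
  have hcard1 : (Finset.univ.image (algebraMap (ZMod p) F)).card = p := by
    rw [Finset.card_image_of_injective _ hinj, Finset.card_univ, ZMod.card]
  have hcard2 : f.roots.toFinset.card ≤ p := by
    calc f.roots.toFinset.card ≤ Multiset.card f.roots := f.roots.toFinset_card_le
    _ ≤ f.natDegree := f.card_roots'
    _ = p := hdeg
  have heq : (Finset.univ.image (algebraMap (ZMod p) F)) = f.roots.toFinset :=
    Finset.eq_of_subset_of_card_le himg (by omega)
  have : x ∈ f.roots.toFinset := hroot x hx
  rw [← heq] at this
  rcases Finset.mem_image.mp this with ⟨u, _, hu⟩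
  exact ⟨u, hu⟩

-- an element of (ZMod p)ˣ of maximal order is a nonsquare
lemma ntu_nonsquare (p : ℕ) [hp : Fact p.Prime] (hp2 : p ≠ 2) (u : ZMod p)
    (hord : orderOf u = p - 1) : quadraticChar (ZMod p) u = -1 := by
  have hp3 : 3 ≤ p := by
    have := hp.out.two_le
    rcases Nat.lt_or_ge p 3 with h | h
    · interval_cases p <;> simp_all
    · exact h
  have hu1 : u ^ (p - 1) = 1 := by rw [← hord]; exact pow_orderOf_eq_one u
  have hu0 : u ≠ 0 := by
    intro h
    rw [h, zero_pow (by omega)] at hu1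
    exact zero_ne_one hu1
  rw [quadraticChar_neg_one_iff_not_isSquare]
  rintro ⟨v, rfl⟩
  have hv0 : v ≠ 0 := by
    intro h; apply hu0; rw [h, mul_zero]
  have hpow : (v * v) ^ ((p - 1) / 2) = 1 := by
    have h2 : 2 * ((p - 1) / 2) = p - 1 := by
      have : p % 2 = 1 := (Nat.Prime.mod_two_eq_one_iff_ne_two hp.out).mpr hp2
      omega
    rw [← pow_two, ← pow_mul, h2]
    exact ZMod.pow_card_sub_one_eq_one hv0
  have hdvd : orderOf (v * v) ∣ (p - 1) / 2 := orderOf_dvd_of_pow_eq_one hpow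
  rw [hord] at hdvd
  have := Nat.le_of_dvd (by omega) hdvd
  omega



-- fiber counting for surjective additive maps between finite groups
lemma ntu_fiber_card {G V : Type} [Fintype G] [Fintype V] [DecidableEq V]
    [AddCommGroup G] [AddCommGroup V]
    (L : G → V) (hsub : ∀ a b, L (a - b) = L a - L b)
    (hsurj : Function.Surjective L) (v : V) :
    (Finset.univ.filter (fun x => L x = v)).card * Fintype.card V = Fintype.card G := by
  classical
  have hfib : ∀ w : V, (Finset.univ.filter (fun x => L x = w)).card
      = (Finset.univ.filter (fun x => L x = 0)).card := by
    intro w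
    obtain ⟨x0, hx0⟩ := hsurj w
    apply Finset.card_bij' (fun x _ => x - x0) (fun x _ => x + x0)
    · intro a ha
      simp only [Finset.mem_filter, Finset.mem_univ, true_and] at ha ⊢
      rw [hsub, ha, hx0, sub_self]
    · intro a ha
      simp only [Finset.mem_filter, Finset.mem_univ, true_and] at ha ⊢
      have := hsub (a + x0) x0
      simp only [add_sub_cancel_right] at this
      rw [ha] at this
      have h2 : L (a + x0) = L x0 := by
        have h3 : L (a + x0) - L x0 = 0 := this.symm
        rw [sub_eq_zero] at h3
        exact h3
      rw [h2, hx0]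
    · intro a _; simp
    · intro a _; simp
  have hpart : ∑ w : V, (Finset.univ.filter (fun x => L x = w)).card = Fintype.card G := by
    rw [← Finset.card_univ, Finset.card_eq_sum_card_fiberwise (f := L) (t := Finset.univ)]
    intro x _; exact Finset.mem_univ _
  calc (Finset.univ.filter (fun x => L x = v)).card * Fintype.card V
      = ∑ _w : V, (Finset.univ.filter (fun x => L x = v)).card := by
        rw [Finset.sum_const, Finset.card_univ, smul_eq_mul, mul_comm]
    _ = ∑ w : V, (Finset.univ.filter (fun x => L x = w)).card := by
        apply Finset.sum_congr rfl; intro w _; rw [hfib v, hfib w]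
    _ = Fintype.card G := hpart

lemma ntu_sum_comp {G V : Type} [Fintype G] [Fintype V] [DecidableEq V]
    [AddCommGroup G] [AddCommGroup V]
    (L : G → V) (hsub : ∀ a b, L (a - b) = L a - L b)
    (hsurj : Function.Surjective L) (f : V → ℤ) (k : ℕ)
    (hk : k * Fintype.card V = Fintype.card G) :
    ∑ x : G, f (L x) = k * ∑ v : V, f v := by
  classical
  rw [Finset.sum_comp]
  have himg : Finset.univ.image L = Finset.univ := by
    apply Finset.eq_univ_of_forall
    intro v
    obtain ⟨x, hx⟩ := hsurj v
    exact Finset.mem_image.mpr ⟨x, Finset.mem_univ x, hx⟩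
  rw [himg, Finset.mul_sum]
  apply Finset.sum_congr rfl
  intro v _
  have h1 := ntu_fiber_card L hsub hsurj v
  have hV : 0 < Fintype.card V := Fintype.card_pos
  have : (Finset.univ.filter (fun x => L x = v)).card = k := by
    have := hk ▸ h1
    exact Nat.eq_of_mul_eq_mul_right hV (by omega)
  rw [this]
  simp [mul_comm]



section
variable (p : ℕ) [hp : Fact p.Prime] {F : Type} [Field F] [Fintype F] [Algebra (ZMod p) F]

lemma ntu_trace_nondeg (a : F) (ha : a ≠ 0) :
    ∃ b : F, Algebra.trace (ZMod p) F (a * b) ≠ 0 := by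
  haveI : FiniteDimensional (ZMod p) F := Module.Finite.of_basis (Module.finBasis _ _)
  have htr := (traceForm_nondegenerate (ZMod p) F).1 a
  simp_rw [Algebra.traceForm_apply] at htr
  by_contra! hf
  exact ha (htr hf)

lemma ntu_trace_lin (u : ZMod p) (x : F) :
    Algebra.trace (ZMod p) F (algebraMap (ZMod p) F u * x) = u * Algebra.trace (ZMod p) F x := by
  rw [← Algebra.smul_def, map_smul, smul_eq_mul]

lemma ntu_trace_one_exists : ∃ x0 : F, Algebra.trace (ZMod p) F x0 = 1 := by
  obtain ⟨b, hb⟩ := ntu_trace_nondeg p (1 : F) one_ne_zero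
  rw [one_mul] at hb
  refine ⟨(Algebra.trace (ZMod p) F b)⁻¹ • b, ?_⟩
  rw [map_smul, smul_eq_mul, inv_mul_cancel₀ hb]

lemma ntu_trace_surj : Function.Surjective (Algebra.trace (ZMod p) F) := by
  obtain ⟨x0, hx0⟩ := ntu_trace_one_exists p (F := F)
  intro c
  exact ⟨c • x0, by rw [map_smul, hx0, smul_eq_mul, mul_one]⟩

lemma ntu_pair_surj (y : F) (hy : ∀ u : ZMod p, algebraMap (ZMod p) F u ≠ y) :
    Function.Surjective (fun x : F =>
      ((Algebra.trace (ZMod p) F x, Algebra.trace (ZMod p) F (y * x)) : ZMod p × ZMod p)) := by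
  obtain ⟨x0, hx0⟩ := ntu_trace_one_exists p (F := F)
  set T := Algebra.trace (ZMod p) F with hT
  set c := T (y * x0) with hc
  have hker : ∃ kk : F, T kk = 0 ∧ T (y * kk) ≠ 0 := by
    by_contra! hcon
    have hall : ∀ x : F, T (y * x) = T x * c := by
      intro x
      have h1 : T (x - (T x) • x0) = 0 := by
        rw [map_sub, map_smul, hx0, smul_eq_mul, mul_one, sub_self]
      have h2 := hcon _ h1
      rw [mul_sub, map_sub, mul_smul_comm, map_smul, smul_eq_mul, sub_eq_zero] at h2
      rw [h2, hc, mul_comm]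
    have hzero : ∀ x : F, T ((y - algebraMap (ZMod p) F c) * x) = 0 := by
      intro x
      rw [sub_mul, map_sub, hall, ntu_trace_lin, mul_comm (c : ZMod p), sub_self]
    have hy0 : y - algebraMap (ZMod p) F c = 0 := by
      by_contra hne
      obtain ⟨b, hb⟩ := ntu_trace_nondeg p _ hne
      exact hb (hzero b)
    apply hy c
    rw [eq_comm, ← sub_eq_zero]
    exact hy0
  obtain ⟨kk, hk0, hk1⟩ := hker
  rintro ⟨s, t⟩
  refine ⟨s • x0 + ((t - s * c) * (T (y * kk))⁻¹) • kk, ?_⟩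
  have e1 : T (s • x0 + ((t - s * c) * (T (y * kk))⁻¹) • kk) = s := by
    rw [map_add, map_smul, map_smul, hx0, hk0, smul_eq_mul, smul_eq_mul,
      mul_one, mul_zero, add_zero]
  have e2 : T (y * (s • x0 + ((t - s * c) * (T (y * kk))⁻¹) • kk)) = t := by
    rw [mul_add, mul_smul_comm, mul_smul_comm, map_add, map_smul, map_smul,
      smul_eq_mul, smul_eq_mul, ← hc, mul_assoc, inv_mul_cancel₀ hk1, mul_one]
    ring
  simp only [Prod.mk.injEq]
  exact ⟨e1, e2⟩

end



lemma ntu_sum_pow (p m : ℕ) [hp : Fact p.Prime] {F : Type} [Field F] [Fintype F]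
    (hcard : Fintype.card F = p ^ m) (hm : 0 < m) (ω : F) (hω : orderOf ω = p ^ m - 1)
    (f : F → ℤ) :
    ∑ j ∈ Finset.range (p ^ m - 1), f (ω ^ j) = (∑ x : F, f x) - f 0 := by
  classical
  have hpm : 1 < p ^ m := Nat.one_lt_pow (by omega) hp.out.one_lt
  have hω1 : ω ^ (p ^ m - 1) = 1 := by rw [← hω]; exact pow_orderOf_eq_one ω
  have hω0 : ω ≠ 0 := by
    intro h
    rw [h, zero_pow (by omega)] at hω1
    exact zero_ne_one hω1
  have hinj : Set.InjOn (ω ^ ·) ↑(Finset.range (p ^ m - 1)) := by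
    rw [Finset.coe_range]
    have := pow_injOn_Iio_orderOf (x := ω)
    rwa [hω] at this
  have hsub : (Finset.range (p ^ m - 1)).image (ω ^ ·) ⊆ Finset.univ.erase 0 := by
    intro y hy
    rcases Finset.mem_image.mp hy with ⟨j, _, rfl⟩
    exact Finset.mem_erase.mpr ⟨pow_ne_zero j hω0, Finset.mem_univ _⟩
  have hcard1 : ((Finset.range (p ^ m - 1)).image (ω ^ ·)).card = p ^ m - 1 := by
    rw [Finset.card_image_of_injOn hinj, Finset.card_range]
  have hcard2 : (Finset.univ.erase (0 : F)).card = p ^ m - 1 := by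
    rw [Finset.card_erase_of_mem (Finset.mem_univ _), Finset.card_univ, hcard]
  have heq : (Finset.range (p ^ m - 1)).image (ω ^ ·) = Finset.univ.erase 0 :=
    Finset.eq_of_subset_of_card_le hsub (by omega)
  rw [← Finset.sum_image (fun a ha b hb => hinj ha hb), heq]
  have := Finset.sum_erase_add Finset.univ f (Finset.mem_univ (0 : F))
  omega


open Finset in
lemma ntu_char_sq_sum (p : ℕ) [hp : Fact p.Prime] :
    ∑ a : ZMod p, quadraticChar (ZMod p) a * quadraticChar (ZMod p) a = (p : ℤ) - 1 := by
  have h1 : ∀ a : ZMod p, quadraticChar (ZMod p) a * quadraticChar (ZMod p) a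
      = 1 - (if a = 0 then (1 : ℤ) else 0) := by
    intro a
    by_cases h : a = 0
    · simp [h, quadraticChar_zero]
    · have := quadraticChar_sq_one (F := ZMod p) h
      rw [pow_two] at this
      rw [this, if_neg h, sub_zero]
  simp_rw [h1]
  rw [Finset.sum_sub_distrib, Finset.sum_const, Finset.sum_ite_eq' Finset.univ (0 : ZMod p) (fun _ => (1:ℤ))]
  simp [ZMod.card]

open Finset in
lemma ntu_ite_sum (p : ℕ) [hp : Fact p.Prime] :
    ∑ a : ZMod p, (if a = 0 then (1 : ℤ) else 0) = 1 := by
  rw [Finset.sum_ite_eq' Finset.univ (0 : ZMod p) (fun _ => (1:ℤ))]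
  simp

section
variable (p m : ℕ) [hp : Fact p.Prime] {F : Type} [Field F] [Fintype F] [Algebra (ZMod p) F]

-- case y ∈ F_p
lemma ntu_T_u (hcard : Fintype.card F = p ^ m) (hm : 1 ≤ m) (u : ZMod p) (hu : u ≠ 0) :
    ∑ x : F, quadraticChar (ZMod p) (Algebra.trace (ZMod p) F x)
      * quadraticChar (ZMod p) (Algebra.trace (ZMod p) F (algebraMap (ZMod p) F u * x))
    = quadraticChar (ZMod p) u * ((p : ℤ) ^ (m - 1) * ((p : ℤ) - 1)) := by
  have key : ∀ x : F, quadraticChar (ZMod p) (Algebra.trace (ZMod p) F x)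
      * quadraticChar (ZMod p) (Algebra.trace (ZMod p) F (algebraMap (ZMod p) F u * x))
      = (fun a => quadraticChar (ZMod p) u * (quadraticChar (ZMod p) a * quadraticChar (ZMod p) a))
        (Algebra.trace (ZMod p) F x) := by
    intro x
    rw [ntu_trace_lin, map_mul]
    ring
  simp_rw [key]
  have hs := ntu_sum_comp (Algebra.trace (ZMod p) F) (fun a b => map_sub _ a b) (ntu_trace_surj p)
    (fun a => quadraticChar (ZMod p) u * (quadraticChar (ZMod p) a * quadraticChar (ZMod p) a))
    (p ^ (m - 1)) (by rw [ZMod.card, hcard, ← pow_succ]; congr 1; omega)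
  beta_reduce at hs
  rw [hs, ← Finset.mul_sum, ntu_char_sq_sum]
  push_cast
  ring

lemma ntu_Z_u (hcard : Fintype.card F = p ^ m) (hm : 1 ≤ m) (u : ZMod p) (hu : u ≠ 0) :
    ∑ x : F, (if Algebra.trace (ZMod p) F x = 0 then (1:ℤ) else 0)
      * (if Algebra.trace (ZMod p) F (algebraMap (ZMod p) F u * x) = 0 then (1:ℤ) else 0)
    = (p : ℤ) ^ (m - 1) := by
  have key : ∀ x : F, (if Algebra.trace (ZMod p) F x = 0 then (1:ℤ) else 0)
      * (if Algebra.trace (ZMod p) F (algebraMap (ZMod p) F u * x) = 0 then (1:ℤ) else 0)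
      = (fun a => if a = 0 then (1:ℤ) else 0) (Algebra.trace (ZMod p) F x) := by
    intro x
    rw [ntu_trace_lin]
    by_cases h : Algebra.trace (ZMod p) F x = 0
    · simp [h]
    · simp [h, hu]
  simp_rw [key]
  have hs := ntu_sum_comp (Algebra.trace (ZMod p) F) (fun a b => map_sub _ a b) (ntu_trace_surj p)
    (fun a => if a = 0 then (1:ℤ) else 0)
    (p ^ (m - 1)) (by rw [ZMod.card, hcard, ← pow_succ]; congr 1; omega)
  beta_reduce at hs
  rw [hs, ntu_ite_sum]
  push_cast
  ring

-- case y ∉ F_p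
lemma ntu_T_gen (hcard : Fintype.card F = p ^ m) (hm : 2 ≤ m) (hp2 : p ≠ 2)
    (y : F) (hy : ∀ u : ZMod p, algebraMap (ZMod p) F u ≠ y) :
    ∑ x : F, quadraticChar (ZMod p) (Algebra.trace (ZMod p) F x)
      * quadraticChar (ZMod p) (Algebra.trace (ZMod p) F (y * x)) = 0 := by
  have hs := ntu_sum_comp (fun x : F => ((Algebra.trace (ZMod p) F x, Algebra.trace (ZMod p) F (y * x)) : ZMod p × ZMod p))
    (fun a b => by simp only [Prod.mk_sub_mk, map_sub, mul_sub]) (ntu_pair_surj p y hy)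
    (fun v : ZMod p × ZMod p => quadraticChar (ZMod p) v.1 * quadraticChar (ZMod p) v.2)
    (p ^ (m - 2)) (by rw [Fintype.card_prod, ZMod.card, hcard, ← pow_two, ← pow_add]; congr 1; omega)
  simp only at hs
  rw [hs]
  have hchar : ringChar (ZMod p) ≠ 2 := by rw [ZMod.ringChar_zmod_n]; exact hp2
  rw [Fintype.sum_prod_type]
  have : ∀ a : ZMod p, ∑ b : ZMod p, quadraticChar (ZMod p) a * quadraticChar (ZMod p) b
      = quadraticChar (ZMod p) a * ∑ b : ZMod p, quadraticChar (ZMod p) b := by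
    intro a; rw [Finset.mul_sum]
  simp_rw [this, quadraticChar_sum_zero hchar, mul_zero, Finset.sum_const_zero, mul_zero]

lemma ntu_Z_gen (hcard : Fintype.card F = p ^ m) (hm : 2 ≤ m)
    (y : F) (hy : ∀ u : ZMod p, algebraMap (ZMod p) F u ≠ y) :
    ∑ x : F, (if Algebra.trace (ZMod p) F x = 0 then (1:ℤ) else 0)
      * (if Algebra.trace (ZMod p) F (y * x) = 0 then (1:ℤ) else 0)
    = (p : ℤ) ^ (m - 2) := by
  have hs := ntu_sum_comp (fun x : F => ((Algebra.trace (ZMod p) F x, Algebra.trace (ZMod p) F (y * x)) : ZMod p × ZMod p))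
    (fun a b => by simp only [Prod.mk_sub_mk, map_sub, mul_sub]) (ntu_pair_surj p y hy)
    (fun v : ZMod p × ZMod p => (if v.1 = 0 then (1:ℤ) else 0) * (if v.2 = 0 then (1:ℤ) else 0))
    (p ^ (m - 2)) (by rw [Fintype.card_prod, ZMod.card, hcard, ← pow_two, ← pow_add]; congr 1; omega)
  simp only at hs
  rw [hs]
  rw [Fintype.sum_prod_type]
  have : ∀ a : ZMod p, ∑ b : ZMod p, (if a = 0 then (1:ℤ) else 0) * (if b = 0 then (1:ℤ) else 0)
      = (if a = 0 then (1:ℤ) else 0) * ∑ b : ZMod p, (if b = 0 then (1:ℤ) else 0) := by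
    intro a; rw [Finset.mul_sum]
  simp_rw [this, ntu_ite_sum, mul_one, ntu_ite_sum, mul_one]
  push_cast
  ring

end



lemma ntu_periodic_mod {α : Sort*} (f : ℕ → α) (N : ℕ) (hf : ∀ n, f (n + N) = f n) :
    ∀ a b : ℕ, a % N = b % N → f a = f b := by
  have hmul : ∀ k n, f (n + k * N) = f n := by
    intro k
    induction k with
    | zero => simp
    | succ k ih =>
      intro n
      have : n + (k + 1) * N = (n + k * N) + N := by ring
      rw [this, hf, ih]
  have hmod : ∀ n, f n = f (n % N) := by
    intro n
    conv_lhs => rw [← Nat.mod_add_div' n N]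
    exact hmul _ _
  intro a b h
  rw [hmod a, hmod b, h]

section
variable (p m : ℕ) [hp : Fact p.Prime] {F : Type} [Field F] [Fintype F] [Algebra (ZMod p) F]
  (ω : F)

lemma ntu_omega_ne_zero (hcard : Fintype.card F = p ^ m) (hm : 0 < m)
    (hω : orderOf ω = p ^ m - 1) : ω ≠ 0 := by
  have hpm : 1 < p ^ m := Nat.one_lt_pow (by omega) hp.out.one_lt
  have hω1 : ω ^ (p ^ m - 1) = 1 := by rw [← hω]; exact pow_orderOf_eq_one ω
  intro h
  rw [h, zero_pow (by omega)] at hω1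
  exact zero_ne_one hω1

lemma ntu_exists_u (hp2 : p ≠ 2) (hm : 0 < m) (hcard : Fintype.card F = p ^ m)
    (hω : orderOf ω = p ^ m - 1) (Q : ℕ) (hQ : (p - 1) * Q = p ^ m - 1) :
    ∃ u : ZMod p, algebraMap (ZMod p) F u = ω ^ Q ∧ quadraticChar (ZMod p) u = -1 := by
  have hpm : 1 < p ^ m := Nat.one_lt_pow (by omega) hp.out.one_lt
  have hp1 : 1 < p := hp.out.one_lt
  have hQ0 : 0 < Q := by
    rcases Nat.eq_zero_or_pos Q with h | h
    · rw [h, mul_zero] at hQ; omega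
    · exact h
  have hQdvd : Q ∣ p ^ m - 1 := ⟨p - 1, by rw [mul_comm]; omega⟩
  have hordc : orderOf (ω ^ Q) = p - 1 := by
    rw [orderOf_pow' ω (by omega : Q ≠ 0), hω, Nat.gcd_eq_right hQdvd, ← hQ, Nat.mul_div_cancel _ hQ0]
  have hc1 : (ω ^ Q) ^ (p - 1) = 1 := by rw [← hordc]; exact pow_orderOf_eq_one _
  have hcp : (ω ^ Q) ^ p = ω ^ Q := by
    have : p = (p - 1) + 1 := by omega
    rw [this, pow_succ, hc1, one_mul]
  obtain ⟨u, hu1⟩ := ntu_mem_algebraMap p (ω ^ Q) hcp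
  refine ⟨u, hu1, ?_⟩
  apply ntu_nonsquare p hp2
  rw [← hordc, ← hu1]
  exact (orderOf_injective (algebraMap (ZMod p) F).toMonoidHom
    (algebraMap (ZMod p) F).injective u).symm

variable {u : ZMod p} {Q : ℕ}

lemma ntu_chi_shift (hu1 : algebraMap (ZMod p) F u = ω ^ Q)
    (hu2 : quadraticChar (ZMod p) u = -1) (n : ℕ) :
    ntuChi p ω (n + Q) = - ntuChi p ω n := by
  unfold ntuChi
  rw [pow_add, ← hu1, mul_comm, ntu_trace_lin, map_mul, hu2]
  ring

lemma ntu_z_shift (hu1 : algebraMap (ZMod p) F u = ω ^ Q)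
    (hu2 : quadraticChar (ZMod p) u = -1) (n : ℕ) :
    ntuZ p ω (n + Q) = ntuZ p ω n := by
  have hu0 : u ≠ 0 := by
    intro h; rw [h, quadraticChar_zero] at hu2; norm_num at hu2
  unfold ntuZ
  rw [pow_add, ← hu1, mul_comm, ntu_trace_lin]
  simp [hu0]

lemma ntu_chi_period (hu1 : algebraMap (ZMod p) F u = ω ^ Q)
    (hu2 : quadraticChar (ZMod p) u = -1) (n : ℕ) :
    ntuChi p ω (n + 2 * Q) = ntuChi p ω n := by
  have h : n + 2 * Q = (n + Q) + Q := by ring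
  rw [h, ntu_chi_shift p ω hu1 hu2, ntu_chi_shift p ω hu1 hu2, neg_neg]

lemma ntu_z_period (hu1 : algebraMap (ZMod p) F u = ω ^ Q)
    (hu2 : quadraticChar (ZMod p) u = -1) (n : ℕ) :
    ntuZ p ω (n + 2 * Q) = ntuZ p ω n := by
  have h : n + 2 * Q = (n + Q) + Q := by ring
  rw [h, ntu_z_shift p ω hu1 hu2, ntu_z_shift p ω hu1 hu2]

lemma ntu_t1_period (hu1 : algebraMap (ZMod p) F u = ω ^ Q)
    (hu2 : quadraticChar (ZMod p) u = -1) (n : ℕ) :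
    ntuT1 p ω (n + 2 * Q) = ntuT1 p ω n := by
  rw [ntuT1_eq, ntuT1_eq, ntu_chi_period p ω hu1 hu2]

lemma ntu_t2_period (hu1 : algebraMap (ZMod p) F u = ω ^ Q)
    (hu2 : quadraticChar (ZMod p) u = -1) (n : ℕ) :
    ntuT2 p ω (n + 2 * Q) = ntuT2 p ω n := by
  rw [ntuT2_eq, ntuT2_eq, ntu_chi_period p ω hu1 hu2]

end



lemma ntu_A (p m : ℕ) [hp : Fact p.Prime] (hp2 : p ≠ 2) (hm : 2 ≤ m)
    {F : Type} [Field F] [Fintype F] [Algebra (ZMod p) F]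
    (hcard : Fintype.card F = p ^ m) (ω : F) (hω : orderOf ω = p ^ m - 1)
    (Q Q1 Q2 k : ℕ) (hQ : (p - 1) * Q = p ^ m - 1)
    (hQ1 : (p - 1) * Q1 = p ^ (m - 1) - 1) (hQ2 : (p - 1) * Q2 = p ^ (m - 2) - 1)
    (hQQ1 : Q = p ^ (m - 1) + Q1) (hk : p - 1 = 2 * k)
    (u : ZMod p) (hu1 : algebraMap (ZMod p) F u = ω ^ Q) (hu2 : quadraticChar (ZMod p) u = -1)
    (d : ℕ) :
    ∑ j ∈ Finset.range (2 * Q), (-1:ℤ) ^ ((ntuT1 p ω j + ntuT2 p ω (j + d)).val)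
      = if d % (2 * Q) = 0 then 2 * (p:ℤ) ^ (m - 1) - 2 * (Q1:ℤ)
        else if d % (2 * Q) = Q then -2 * (Q:ℤ)
        else -2 * (Q2:ℤ) := by
  have hp1 : 1 < p := hp.out.one_lt
  have hp3 : 3 ≤ p := by rcases Nat.lt_or_ge p 3 with h | h; · interval_cases p <;> simp_all
                         · exact h
  have hpm : 1 < p ^ m := Nat.one_lt_pow (by omega) hp1
  have hpm1 : 1 ≤ p ^ (m - 1) := Nat.one_le_pow _ _ (by omega)
  have hpm2 : 1 ≤ p ^ (m - 2) := Nat.one_le_pow _ _ (by omega)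
  have hQ0 : 0 < Q := by
    rcases Nat.eq_zero_or_pos Q with h | h
    · rw [h, mul_zero] at hQ; omega
    · exact h
  have hk0 : 0 < k := by omega
  have hkz : ((k:ℤ)) ≠ 0 := Int.natCast_ne_zero.mpr (by omega)
  have hω0 : ω ≠ 0 := ntu_omega_ne_zero p m ω hcard (by omega) hω
  have hu0 : u ≠ 0 := by
    intro h; rw [h, quadraticChar_zero] at hu2; norm_num at hu2
  -- integer casts of the geometric identities
  have hQ1z : ((p:ℤ) - 1) * (Q1:ℤ) = (p:ℤ) ^ (m - 1) - 1 := by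
    have := congrArg (Nat.cast : ℕ → ℤ) hQ1
    push_cast [Nat.cast_sub (by omega : 1 ≤ p), Nat.cast_sub hpm1] at this
    exact this
  have hQ2z : ((p:ℤ) - 1) * (Q2:ℤ) = (p:ℤ) ^ (m - 2) - 1 := by
    have := congrArg (Nat.cast : ℕ → ℤ) hQ2
    push_cast [Nat.cast_sub (by omega : 1 ≤ p), Nat.cast_sub hpm2] at this
    exact this
  have hkpz : (p:ℤ) - 1 = 2 * (k:ℤ) := by omega
  have hQQ1z : (Q:ℤ) = (p:ℤ) ^ (m - 1) + (Q1:ℤ) := by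
    have := congrArg (Nat.cast : ℕ → ℤ) hQQ1
    push_cast at this
    exact this
  -- step 1 : pointwise rewriting
  have step1 : ∑ j ∈ Finset.range (2 * Q), (-1:ℤ) ^ ((ntuT1 p ω j + ntuT2 p ω (j + d)).val)
      = ∑ j ∈ Finset.range (2 * Q),
          (ntuChi p ω j * ntuChi p ω (j + d) - ntuChi p ω j * ntuZ p ω (j + d)
            + (ntuZ p ω j * ntuChi p ω (j + d) - ntuZ p ω j * ntuZ p ω (j + d))) := by
    apply Finset.sum_congr rfl
    intro j _
    rw [ntu_neg_one_pow_add, ntuT1_pow, ntuT2_pow]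
    ring
  rw [step1, Finset.sum_add_distrib, Finset.sum_sub_distrib, Finset.sum_sub_distrib]
  -- cross terms vanish
  have cross1 : ∑ j ∈ Finset.range (2 * Q), ntuChi p ω j * ntuZ p ω (j + d) = 0 := by
    rw [ntu_sum_two_blocks]
    have hneg : ∀ j, ntuChi p ω (j + Q) * ntuZ p ω (j + Q + d)
        = - (ntuChi p ω j * ntuZ p ω (j + d)) := by
      intro j
      have h1 : j + Q + d = (j + d) + Q := by ring
      rw [h1, ntu_chi_shift p ω hu1 hu2, ntu_z_shift p ω hu1 hu2]
      ring
    rw [Finset.sum_congr rfl (fun j _ => hneg j)]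
    simp
  have cross2 : ∑ j ∈ Finset.range (2 * Q), ntuZ p ω j * ntuChi p ω (j + d) = 0 := by
    rw [ntu_sum_two_blocks]
    have hneg : ∀ j, ntuZ p ω (j + Q) * ntuChi p ω (j + Q + d)
        = - (ntuZ p ω j * ntuChi p ω (j + d)) := by
      intro j
      have h1 : j + Q + d = (j + d) + Q := by ring
      rw [h1, ntu_chi_shift p ω hu1 hu2, ntu_z_shift p ω hu1 hu2]
      ring
    rw [Finset.sum_congr rfl (fun j _ => hneg j)]
    simp
  rw [cross1, cross2]
  -- main identities for the two surviving sums
  have hk2Q : k * (2 * Q) = p ^ m - 1 := by rw [← hQ, hk]; ring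
  have hyform : ∀ j : ℕ, ω ^ (j + d) = ω ^ d * ω ^ j := by
    intro j; rw [pow_add, mul_comm]
  have per1 : ∀ n, ntuChi p ω (n + 2 * Q) * ntuChi p ω (n + 2 * Q + d)
      = ntuChi p ω n * ntuChi p ω (n + d) := by
    intro n
    have h1 : n + 2 * Q + d = (n + d) + 2 * Q := by ring
    rw [h1, ntu_chi_period p ω hu1 hu2, ntu_chi_period p ω hu1 hu2]
  have per4 : ∀ n, ntuZ p ω (n + 2 * Q) * ntuZ p ω (n + 2 * Q + d)
      = ntuZ p ω n * ntuZ p ω (n + d) := by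
    intro n
    have h1 : n + 2 * Q + d = (n + d) + 2 * Q := by ring
    rw [h1, ntu_z_period p ω hu1 hu2, ntu_z_period p ω hu1 hu2]
  have main1 : (k:ℤ) * ∑ j ∈ Finset.range (2 * Q), ntuChi p ω j * ntuChi p ω (j + d)
      = ∑ x : F, quadraticChar (ZMod p) (Algebra.trace (ZMod p) F x)
          * quadraticChar (ZMod p) (Algebra.trace (ZMod p) F (ω ^ d * x)) := by
    rw [← ntu_sum_blocks (2 * Q) k (fun j => ntuChi p ω j * ntuChi p ω (j + d)) per1, hk2Q]
    have hpt : ∀ j, ntuChi p ω j * ntuChi p ω (j + d)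
        = quadraticChar (ZMod p) (Algebra.trace (ZMod p) F (ω ^ j))
            * quadraticChar (ZMod p) (Algebra.trace (ZMod p) F (ω ^ d * ω ^ j)) := by
      intro j
      simp only [ntuChi]
      rw [hyform j]
    rw [Finset.sum_congr rfl (fun j _ => hpt j)]
    have hsp := ntu_sum_pow p m hcard (by omega) ω hω (fun x : F =>
      quadraticChar (ZMod p) (Algebra.trace (ZMod p) F x)
        * quadraticChar (ZMod p) (Algebra.trace (ZMod p) F (ω ^ d * x)))
    beta_reduce at hsp
    rw [hsp]
    simp [quadraticChar_zero]
  have main4 : (k:ℤ) * ∑ j ∈ Finset.range (2 * Q), ntuZ p ω j * ntuZ p ω (j + d)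
      = (∑ x : F, (if Algebra.trace (ZMod p) F x = 0 then (1:ℤ) else 0)
          * (if Algebra.trace (ZMod p) F (ω ^ d * x) = 0 then (1:ℤ) else 0)) - 1 := by
    rw [← ntu_sum_blocks (2 * Q) k (fun j => ntuZ p ω j * ntuZ p ω (j + d)) per4, hk2Q]
    have hpt : ∀ j, ntuZ p ω j * ntuZ p ω (j + d)
        = (if Algebra.trace (ZMod p) F (ω ^ j) = 0 then (1:ℤ) else 0)
            * (if Algebra.trace (ZMod p) F (ω ^ d * ω ^ j) = 0 then (1:ℤ) else 0) := by
      intro j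
      simp only [ntuZ]
      rw [hyform j]
    rw [Finset.sum_congr rfl (fun j _ => hpt j)]
    have hsp := ntu_sum_pow p m hcard (by omega) ω hω (fun x : F =>
      (if Algebra.trace (ZMod p) F x = 0 then (1:ℤ) else 0)
        * (if Algebra.trace (ZMod p) F (ω ^ d * x) = 0 then (1:ℤ) else 0))
    beta_reduce at hsp
    rw [hsp]
    simp
  -- case analysis on d
  have hdq : Q * (d / Q) + d % Q = d := Nat.div_add_mod d Q
  by_cases hr : d % Q = 0
  · -- ω^d lies in the prime field
    have hd' : d = Q * (d / Q) := by omega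
    have hyu : ω ^ d = algebraMap (ZMod p) F (u ^ (d / Q)) := by
      rw [map_pow, hu1, ← pow_mul, ← hd']
    rcases Nat.even_or_odd (d / Q) with ⟨a, ha⟩ | ⟨a, ha⟩
    · -- even quotient : d ≡ 0 mod 2Q
      have hd0 : d % (2 * Q) = 0 := by
        have : d = a * (2 * Q) := by rw [hd', ha]; ring
        rw [this, Nat.mul_mod_left]
      rw [if_pos hd0]
      have hT := ntu_T_u p m hcard (by omega) (u ^ (d / Q)) (pow_ne_zero _ hu0)
      rw [← hyu] at hT
      have hchar : quadraticChar (ZMod p) (u ^ (d / Q)) = 1 := by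
        rw [map_pow, hu2, ha, ← two_mul, pow_mul]
        norm_num
      rw [hchar, one_mul] at hT
      have hZ := ntu_Z_u p m hcard (by omega) (u ^ (d / Q)) (pow_ne_zero _ hu0)
      rw [← hyu] at hZ
      have hSum1 : ∑ j ∈ Finset.range (2 * Q), ntuChi p ω j * ntuChi p ω (j + d)
          = 2 * (p:ℤ) ^ (m - 1) := by
        apply mul_left_cancel₀ hkz
        rw [main1, hT, hkpz]
        ring
      have hSum4 : ∑ j ∈ Finset.range (2 * Q), ntuZ p ω j * ntuZ p ω (j + d)
          = 2 * (Q1:ℤ) := by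
        apply mul_left_cancel₀ hkz
        rw [main4, hZ, ← hQ1z, hkpz]
        ring
      rw [hSum1, hSum4]
      ring
    · -- odd quotient : d ≡ Q mod 2Q
      have hdQ : d % (2 * Q) = Q := by
        have h1 : d = Q + a * (2 * Q) := by rw [hd', ha]; ring
        rw [h1, Nat.add_mul_mod_self_right, Nat.mod_eq_of_lt (by omega)]
      rw [if_neg (by omega), if_pos hdQ]
      have hT := ntu_T_u p m hcard (by omega) (u ^ (d / Q)) (pow_ne_zero _ hu0)
      rw [← hyu] at hT
      have hchar : quadraticChar (ZMod p) (u ^ (d / Q)) = -1 := by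
        rw [map_pow, hu2, ha, pow_add, pow_mul]
        norm_num
      rw [hchar] at hT
      have hZ := ntu_Z_u p m hcard (by omega) (u ^ (d / Q)) (pow_ne_zero _ hu0)
      rw [← hyu] at hZ
      have hSum1 : ∑ j ∈ Finset.range (2 * Q), ntuChi p ω j * ntuChi p ω (j + d)
          = -2 * (p:ℤ) ^ (m - 1) := by
        apply mul_left_cancel₀ hkz
        rw [main1, hT, hkpz]
        ring
      have hSum4 : ∑ j ∈ Finset.range (2 * Q), ntuZ p ω j * ntuZ p ω (j + d)
          = 2 * (Q1:ℤ) := by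
        apply mul_left_cancel₀ hkz
        rw [main4, hZ, ← hQ1z, hkpz]
        ring
      rw [hSum1, hSum4, hQQ1z]
      ring
  · -- ω^d is not in the prime field
    have hrlt : d % Q < Q := Nat.mod_lt _ hQ0
    have hy2 : ∀ w : ZMod p, algebraMap (ZMod p) F w ≠ ω ^ d := by
      intro w hw
      have hsplit : ω ^ d = algebraMap (ZMod p) F (u ^ (d / Q)) * ω ^ (d % Q) := by
        conv_lhs => rw [← hdq]
        rw [pow_add, pow_mul, ← hu1, ← map_pow]
      have hne : (u ^ (d / Q)) ≠ 0 := pow_ne_zero _ hu0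
      have hres : ω ^ (d % Q) = algebraMap (ZMod p) F (w * (u ^ (d / Q))⁻¹) := by
        have halg : algebraMap (ZMod p) F (u ^ (d / Q)) ≠ 0 :=
          (map_ne_zero (algebraMap (ZMod p) F)).mpr hne
        rw [map_mul, map_inv₀, hw, hsplit,
          mul_comm (algebraMap (ZMod p) F (u ^ (d / Q))) (ω ^ (d % Q)),
          mul_assoc, mul_inv_cancel₀ halg, mul_one]
      have hw0 : w * (u ^ (d / Q))⁻¹ ≠ 0 := by
        intro h
        rw [h, map_zero] at hres
        exact pow_ne_zero _ hω0 hres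
      have hpow1 : ω ^ ((d % Q) * (p - 1)) = 1 := by
        rw [pow_mul, hres, ← map_pow, ZMod.pow_card_sub_one_eq_one hw0, map_one]
      have hdvd : orderOf ω ∣ (d % Q) * (p - 1) := orderOf_dvd_of_pow_eq_one hpow1
      rw [hω, ← hQ] at hdvd
      have hdvd2 : (p - 1) * Q ∣ (p - 1) * (d % Q) := by
        rwa [mul_comm (d % Q)] at hdvd
      have hQr : Q ∣ d % Q := (Nat.mul_dvd_mul_iff_left (by omega : 0 < p - 1)).mp hdvd2
      have := Nat.le_of_dvd (by omega) hQr
      omega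
    have hT := ntu_T_gen p m hcard hm hp2 (ω ^ d) hy2
    have hZ := ntu_Z_gen p m hcard hm (ω ^ d) hy2
    have hSum1 : ∑ j ∈ Finset.range (2 * Q), ntuChi p ω j * ntuChi p ω (j + d) = 0 := by
      apply mul_left_cancel₀ hkz
      rw [main1, hT, mul_zero]
    have hSum4 : ∑ j ∈ Finset.range (2 * Q), ntuZ p ω j * ntuZ p ω (j + d)
        = 2 * (Q2:ℤ) := by
      apply mul_left_cancel₀ hkz
      rw [main4, hZ, ← hQ2z, hkpz]
      ring
    have hne0 : d % (2 * Q) ≠ 0 := by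
      intro h0
      have h1 : Q ∣ d := dvd_trans ⟨2, by ring⟩ (Nat.dvd_of_mod_eq_zero h0)
      exact hr (Nat.eq_zero_of_dvd_of_lt h1 (by omega) |> fun _ => by
        exact (Nat.mod_eq_zero_of_dvd h1))
    have hneQ : d % (2 * Q) ≠ Q := by
      intro hQeq
      have h2 := Nat.div_add_mod d (2 * Q)
      rw [hQeq] at h2
      have h1 : Q ∣ d := by
        refine ⟨2 * (d / (2 * Q)) + 1, ?_⟩
        calc d = 2 * Q * (d / (2 * Q)) + Q := h2.symm
        _ = Q * (2 * (d / (2 * Q)) + 1) := by ring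
      exact hr (Nat.mod_eq_zero_of_dvd h1)
    rw [if_neg hne0, if_neg hneQ, hSum1, hSum4]
    ring



lemma ntu_nat_mod_of_int_dvd (n a b : ℕ) (h : ((n:ℤ)) ∣ (b:ℤ) - (a:ℤ)) :
    a % n = b % n := by
  have hme : Int.ModEq (n:ℤ) (a:ℤ) (b:ℤ) := Int.ModEq.symm (Int.modEq_iff_dvd.mpr (by
    have : (a:ℤ) - (b:ℤ) = -((b:ℤ) - (a:ℤ)) := by ring
    rw [this]
    exact dvd_neg.mpr h))
  have h2 : (a:ℤ) % (n:ℤ) = (b:ℤ) % (n:ℤ) := hme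
  have h3 : ((a % n : ℕ) : ℤ) = ((b % n : ℕ) : ℤ) := by
    rw [Int.natCast_mod, Int.natCast_mod]
    exact h2
  exact_mod_cast h3

lemma ntu_mod_eq_iff (Nn X R : ℕ) (hNn : 0 < Nn) (hR : R < Nn) :
    X % Nn = R ↔ ((Nn:ℤ) ∣ (X:ℤ) - (R:ℤ)) := by
  constructor
  · intro h
    set q := X / Nn with hq
    refine ⟨(q : ℤ), ?_⟩
    have hX := Nat.div_add_mod X Nn
    rw [h, ← hq] at hX
    have hRX : R ≤ X := by omega
    have hX2 : X - R = Nn * q := by omega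
    have h3 := congrArg (Nat.cast : ℕ → ℤ) hX2
    rw [Nat.cast_sub hRX, Nat.cast_mul] at h3
    exact h3
  · intro hdvd
    have := ntu_nat_mod_of_int_dvd Nn R X (by
      have : (X:ℤ) - (R:ℤ) = (X:ℤ) - (R:ℤ) := rfl
      exact hdvd)
    rw [Nat.mod_eq_of_lt hR] at this
    omega

lemma ntu_geom (p : ℕ) (hp : 1 ≤ p) (n : ℕ) :
    (p - 1) * (∑ i ∈ Finset.range n, p ^ i) = p ^ n - 1 := by
  have hz := geom_sum_mul ((p:ℤ)) n
  have h1 : 1 ≤ p ^ n := Nat.one_le_pow _ _ (by omega)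
  zify [hp, h1]
  linear_combination hz


set_option maxHeartbeats 1000000 in
theorem stmt14 (p m : ℕ) [Fact p.Prime] (hp2 : p ≠ 2) (hm : 1 < m)
    (F : Type) [Field F] [Fintype F] [Algebra (ZMod p) F]
    (hcard : Fintype.card F = p ^ m) (ω : F) (hω : orderOf ω = p ^ m - 1)
    (N : ℕ) (hN : N = 2 * (p ^ m - 1) / (p - 1)) (N1 N2 : ℤ)
    (hN1 : N1 = -2 * (p : ℤ) ^ (m - 1) + 2 * ((p : ℤ) ^ (m - 1) - 1) / ((p : ℤ) - 1))
    (hN2 : N2 = 2 * ((p : ℤ) ^ (m - 2) - 1) / ((p : ℤ) - 1))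
    (e1 e2 : ℕ) (he1 : e1 < N) (he2 : e2 < N) (hlt : e1 < e2)
    (hcond1 : ¬ ((e1 : ℤ) + (e2 : ℤ) ≡ 1 [ZMOD (N : ℤ)]))
    (hcond2 : ¬ ((e1 : ℤ) + (e2 : ℤ) ≡ 1 - ((N / 2 : ℕ) : ℤ) [ZMOD (N : ℤ)]))
    (τ0 : ℤ) (hτ0 : 0 ≤ τ0) (hτ1 : τ0 ≤ (N : ℤ) - 1) :
    pcorr (2 * N) (ntuInterleave (ntuT1 p ω) (ntuT2 p ω) e1) (ntuInterleave (ntuT1 p ω) (ntuT2 p ω) e2) (2 * τ0 + 1) =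
      if τ0 ≡ -(e2 : ℤ) - ((N / 2 : ℕ) : ℤ) [ZMOD (N : ℤ)] ∨ τ0 ≡ (e1 : ℤ) - 1 + ((N / 2 : ℕ) : ℤ) [ZMOD (N : ℤ)] then
        -(N : ℤ) - N2
      else if τ0 ≡ -(e2 : ℤ) [ZMOD (N : ℤ)] ∨ τ0 ≡ (e1 : ℤ) - 1 [ZMOD (N : ℤ)] then
        -N1 - N2
      else -2 * N2 := by
  have hp : Fact p.Prime := inferInstance
  have hp1 : 1 < p := hp.out.one_lt
  have hpodd : p % 2 = 1 := (Nat.Prime.mod_two_eq_one_iff_ne_two hp.out).mpr hp2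
  have hpm : 1 < p ^ m := Nat.one_lt_pow (by omega) hp1
  have hpm1 : 1 ≤ p ^ (m - 1) := Nat.one_le_pow _ _ (by omega)
  have hpm2 : 1 ≤ p ^ (m - 2) := Nat.one_le_pow _ _ (by omega)
  -- geometric sums
  obtain ⟨Q, hQdef⟩ : ∃ q : ℕ, q = ∑ i ∈ Finset.range m, p ^ i := ⟨_, rfl⟩
  obtain ⟨Q1, hQ1def⟩ : ∃ q : ℕ, q = ∑ i ∈ Finset.range (m - 1), p ^ i := ⟨_, rfl⟩
  obtain ⟨Q2, hQ2def⟩ : ∃ q : ℕ, q = ∑ i ∈ Finset.range (m - 2), p ^ i := ⟨_, rfl⟩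
  have hQ : (p - 1) * Q = p ^ m - 1 := by rw [hQdef]; exact ntu_geom p (by omega) m
  have hQ1 : (p - 1) * Q1 = p ^ (m - 1) - 1 := by rw [hQ1def]; exact ntu_geom p (by omega) (m - 1)
  have hQ2 : (p - 1) * Q2 = p ^ (m - 2) - 1 := by rw [hQ2def]; exact ntu_geom p (by omega) (m - 2)
  have hQQ1 : Q = p ^ (m - 1) + Q1 := by
    rw [hQdef, hQ1def]
    conv_lhs => rw [show m = (m - 1) + 1 by omega]
    rw [Finset.sum_range_succ]
    ring
  have hQ0 : 0 < Q := by
    rcases Nat.eq_zero_or_pos Q with h | h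
    · rw [h, mul_zero] at hQ; omega
    · exact h
  obtain ⟨k0, hk⟩ : ∃ k0 : ℕ, p - 1 = 2 * k0 := ⟨(p - 1) / 2, by omega⟩
  -- N = 2Q
  have hN2Q : N = 2 * Q := by
    rw [hN, ← hQ, show 2 * ((p - 1) * Q) = (p - 1) * (2 * Q) by ring,
      Nat.mul_div_cancel_left _ (by omega : 0 < p - 1)]
  subst hN2Q
  rw [show (2 * Q) / 2 = Q from by omega] at hcond2 ⊢
  -- integer versions
  have hQ1z : ((p:ℤ) - 1) * (Q1:ℤ) = (p:ℤ) ^ (m - 1) - 1 := by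
    have := congrArg (Nat.cast : ℕ → ℤ) hQ1
    push_cast [Nat.cast_sub (by omega : 1 ≤ p), Nat.cast_sub hpm1] at this
    exact this
  have hQ2z : ((p:ℤ) - 1) * (Q2:ℤ) = (p:ℤ) ^ (m - 2) - 1 := by
    have := congrArg (Nat.cast : ℕ → ℤ) hQ2
    push_cast [Nat.cast_sub (by omega : 1 ≤ p), Nat.cast_sub hpm2] at this
    exact this
  have hN1' : N1 = -2 * (p:ℤ) ^ (m - 1) + 2 * (Q1:ℤ) := by
    rw [hN1]
    congr 1
    rw [← hQ1z, show (2:ℤ) * (((p:ℤ) - 1) * (Q1:ℤ)) = ((p:ℤ) - 1) * (2 * (Q1:ℤ)) by ring,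
      Int.mul_ediv_cancel_left _ (by omega : (p:ℤ) - 1 ≠ 0)]
  have hN2' : N2 = 2 * (Q2:ℤ) := by
    rw [hN2, ← hQ2z, show (2:ℤ) * (((p:ℤ) - 1) * (Q2:ℤ)) = ((p:ℤ) - 1) * (2 * (Q2:ℤ)) by ring,
      Int.mul_ediv_cancel_left _ (by omega : (p:ℤ) - 1 ≠ 0)]
  -- the nonsquare generator of the prime field
  obtain ⟨u, hu1, hu2⟩ := ntu_exists_u p m ω hp2 (by omega) hcard hω Q hQ
  -- τ0 as a natural number
  obtain ⟨t0, hτcast⟩ : ∃ t : ℕ, (t : ℤ) = τ0 := ⟨τ0.toNat, Int.toNat_of_nonneg hτ0⟩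
  have ht0lt : t0 < 2 * Q := by omega
  -- unfold pcorr and split into even and odd indices
  rw [pcorr, ntu_sum_even_odd (2 * Q)]
  -- even part
  have hM0 : ((2 * (2 * Q) : ℕ) : ℤ) ≠ 0 := by
    push_cast
    omega
  have hMdvd2 : (2:ℤ) ∣ ((2 * (2 * Q) : ℕ) : ℤ) := ⟨((2 * Q : ℕ) : ℤ), by push_cast; ring⟩
  have hcastM : ((2 * (2 * Q) : ℕ) : ℤ) = 4 * (Q:ℤ) := by push_cast; ring
  have heven : ∀ j : ℕ,
      ntuInterleave (ntuT1 p ω) (ntuT2 p ω) e2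
          ((((2 * j : ℕ) : ℤ) + (2 * τ0 + 1)) % ((2 * (2 * Q) : ℕ) : ℤ)).toNat
        = ntuT2 p ω (j + (t0 + e2)) := by
    intro j
    set a : ℤ := ((2 * j : ℕ) : ℤ) + (2 * τ0 + 1) with hadef
    have hacast : a = 2 * (j:ℤ) + 2 * τ0 + 1 := by rw [hadef]; push_cast; ring
    set kk : ℕ := (a % ((2 * (2 * Q) : ℕ) : ℤ)).toNat with hkkdef
    have hkk : (kk : ℤ) = a % ((2 * (2 * Q) : ℕ) : ℤ) :=
      Int.toNat_of_nonneg (Int.emod_nonneg a hM0)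
    have hmodM := Int.emod_def a ((2 * (2 * Q) : ℕ) : ℤ)
    have hkkodd : kk % 2 = 1 := by
      have h2 : (kk : ℤ) % 2 = a % 2 := by
        rw [hkk]
        exact Int.emod_emod_of_dvd a hMdvd2
      rw [hacast] at h2
      omega
    have h3 : 2 * ((kk / 2 : ℕ) : ℤ) + 1 = (kk : ℤ) := by
      have h2 : 2 * (kk / 2) + 1 = kk := by omega
      exact_mod_cast h2
    have h5 : 2 * ((kk / 2 : ℕ) : ℤ)
        = 2 * ((j:ℤ) + τ0 - (2 * (Q:ℤ)) * (a / ((2 * (2 * Q) : ℕ) : ℤ))) := by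
      linear_combination h3 + hkk + hmodM + hacast - (a / ((2 * (2 * Q) : ℕ) : ℤ)) * hcastM
    have hhalf := mul_left_cancel₀ (by norm_num : (2:ℤ) ≠ 0) h5
    have hmod : (kk / 2 + e2) % (2 * Q) = (j + (t0 + e2)) % (2 * Q) := by
      apply ntu_nat_mod_of_int_dvd
      refine ⟨a / ((2 * (2 * Q) : ℕ) : ℤ), ?_⟩
      have hc1 : ((j + (t0 + e2) : ℕ) : ℤ) = (j:ℤ) + τ0 + (e2:ℤ) := by
        push_cast [hτcast]; ring
      have hc2 : ((kk / 2 + e2 : ℕ) : ℤ) = ((kk / 2 : ℕ) : ℤ) + (e2:ℤ) := by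
        push_cast; ring
      rw [hc1, hc2, hhalf]
      push_cast
      ring
    rw [ntuInterleave, if_neg (by omega)]
    exact ntu_periodic_mod (ntuT2 p ω) (2 * Q) (ntu_t2_period p ω hu1 hu2) _ _ hmod
  have hil1 : ∀ j : ℕ, ntuInterleave (ntuT1 p ω) (ntuT2 p ω) e1 (2 * j) = ntuT1 p ω j := by
    intro j
    rw [ntuInterleave, if_pos (by omega)]
    congr 1
    omega
  -- odd part
  have hodd : ∀ j : ℕ,
      ntuInterleave (ntuT1 p ω) (ntuT2 p ω) e2
          ((((2 * j + 1 : ℕ) : ℤ) + (2 * τ0 + 1)) % ((2 * (2 * Q) : ℕ) : ℤ)).toNat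
        = ntuT1 p ω (j + (t0 + 1)) := by
    intro j
    set a : ℤ := ((2 * j + 1 : ℕ) : ℤ) + (2 * τ0 + 1) with hadef
    have hacast : a = 2 * (j:ℤ) + 2 * τ0 + 2 := by rw [hadef]; push_cast; ring
    set kk : ℕ := (a % ((2 * (2 * Q) : ℕ) : ℤ)).toNat with hkkdef
    have hkk : (kk : ℤ) = a % ((2 * (2 * Q) : ℕ) : ℤ) :=
      Int.toNat_of_nonneg (Int.emod_nonneg a hM0)
    have hmodM := Int.emod_def a ((2 * (2 * Q) : ℕ) : ℤ)
    have hkkeven : kk % 2 = 0 := by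
      have h2 : (kk : ℤ) % 2 = a % 2 := by
        rw [hkk]
        exact Int.emod_emod_of_dvd a hMdvd2
      rw [hacast] at h2
      omega
    have h3 : 2 * ((kk / 2 : ℕ) : ℤ) = (kk : ℤ) := by
      have h2 : 2 * (kk / 2) = kk := by omega
      exact_mod_cast h2
    have h5 : 2 * ((kk / 2 : ℕ) : ℤ)
        = 2 * ((j:ℤ) + τ0 + 1 - (2 * (Q:ℤ)) * (a / ((2 * (2 * Q) : ℕ) : ℤ))) := by
      linear_combination h3 + hkk + hmodM + hacast - (a / ((2 * (2 * Q) : ℕ) : ℤ)) * hcastM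
    have hhalf := mul_left_cancel₀ (by norm_num : (2:ℤ) ≠ 0) h5
    have hmod : (kk / 2) % (2 * Q) = (j + (t0 + 1)) % (2 * Q) := by
      apply ntu_nat_mod_of_int_dvd
      refine ⟨a / ((2 * (2 * Q) : ℕ) : ℤ), ?_⟩
      have hc1 : ((j + (t0 + 1) : ℕ) : ℤ) = (j:ℤ) + τ0 + 1 := by
        push_cast [hτcast]; ring
      rw [hc1, hhalf]
      push_cast
      ring
    rw [ntuInterleave, if_pos (by omega)]
    exact ntu_periodic_mod (ntuT1 p ω) (2 * Q) (ntu_t1_period p ω hu1 hu2) _ _ hmod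
  have hil2 : ∀ j : ℕ, ntuInterleave (ntuT1 p ω) (ntuT2 p ω) e1 (2 * j + 1)
      = ntuT2 p ω (j + e1) := by
    intro j
    rw [ntuInterleave, if_neg (by omega)]
    congr 1
    omega
  have heq1 : ∑ j ∈ Finset.range (2 * Q),
      (-1:ℤ) ^ ((ntuInterleave (ntuT1 p ω) (ntuT2 p ω) e1 (2 * j)
        + ntuInterleave (ntuT1 p ω) (ntuT2 p ω) e2
          ((((2 * j : ℕ) : ℤ) + (2 * τ0 + 1)) % ((2 * (2 * Q) : ℕ) : ℤ)).toNat).val)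
      = ∑ j ∈ Finset.range (2 * Q), (-1:ℤ) ^ ((ntuT1 p ω j + ntuT2 p ω (j + (t0 + e2))).val) := by
    apply Finset.sum_congr rfl
    intro j _
    rw [heven j, hil1 j]
  have heq2 : ∑ j ∈ Finset.range (2 * Q),
      (-1:ℤ) ^ ((ntuInterleave (ntuT1 p ω) (ntuT2 p ω) e1 (2 * j + 1)
        + ntuInterleave (ntuT1 p ω) (ntuT2 p ω) e2
          ((((2 * j + 1 : ℕ) : ℤ) + (2 * τ0 + 1)) % ((2 * (2 * Q) : ℕ) : ℤ)).toNat).val)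
      = ∑ j ∈ Finset.range (2 * Q),
          (-1:ℤ) ^ ((ntuT1 p ω j + ntuT2 p ω (j + (e1 + 4 * Q - (t0 + 1)))).val) := by
    have hper : ∀ n : ℕ,
        (fun n => (-1:ℤ) ^ ((ntuT1 p ω n + ntuT2 p ω (n + (e1 + 4 * Q - (t0 + 1)))).val)) (n + 2 * Q)
        = (fun n => (-1:ℤ) ^ ((ntuT1 p ω n + ntuT2 p ω (n + (e1 + 4 * Q - (t0 + 1)))).val)) n := by
      intro n
      simp only
      rw [show n + 2 * Q + (e1 + 4 * Q - (t0 + 1)) = (n + (e1 + 4 * Q - (t0 + 1))) + 2 * Q by omega,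
        ntu_t1_period p ω hu1 hu2, ntu_t2_period p ω hu1 hu2]
    have hshift := ntu_sum_shift (2 * Q)
      (fun n => (-1:ℤ) ^ ((ntuT1 p ω n + ntuT2 p ω (n + (e1 + 4 * Q - (t0 + 1)))).val)) hper (t0 + 1)
    rw [← hshift]
    apply Finset.sum_congr rfl
    intro j _
    rw [hodd j, hil2 j]
    beta_reduce
    rw [show j + (t0 + 1) + (e1 + 4 * Q - (t0 + 1)) = ((j + e1) + 2 * Q) + 2 * Q by omega,
      ntu_t2_period p ω hu1 hu2, ntu_t2_period p ω hu1 hu2,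
      add_comm (ntuT2 p ω (j + e1))]
  rw [heq1, heq2,
    ntu_A p m hp2 (by omega) hcard ω hω Q Q1 Q2 k0 hQ hQ1 hQ2 hQQ1 hk u hu1 hu2 (t0 + e2),
    ntu_A p m hp2 (by omega) hcard ω hω Q Q1 Q2 k0 hQ hQ1 hQ2 hQQ1 hk u hu1 hu2 (e1 + 4 * Q - (t0 + 1))]
  -- dvd characterizations
  have hcastN : ((2 * Q : ℕ) : ℤ) = 2 * (Q:ℤ) := by push_cast; ring
  have hd1c : ((t0 + e2 : ℕ) : ℤ) = τ0 + (e2:ℤ) := by push_cast [hτcast]; ring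
  have hd2c : ((e1 + 4 * Q - (t0 + 1) : ℕ) : ℤ) = (e1:ℤ) + 4 * (Q:ℤ) - (τ0 + 1) := by
    rw [Nat.cast_sub (by omega)]
    push_cast [hτcast]
    ring
  set D1 : Prop := (2 * (Q:ℤ)) ∣ (τ0 + (e2:ℤ)) with hD1def
  set D1Q : Prop := (2 * (Q:ℤ)) ∣ (τ0 + (e2:ℤ) - Q) with hD1Qdef
  set D2 : Prop := (2 * (Q:ℤ)) ∣ ((e1:ℤ) - 1 - τ0) with hD2def
  set D2Q : Prop := (2 * (Q:ℤ)) ∣ ((e1:ℤ) - 1 + (Q:ℤ) - τ0) with hD2Qdef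
  have i10 : (t0 + e2) % (2 * Q) = 0 ↔ D1 := by
    rw [ntu_mod_eq_iff _ _ _ (by omega) (by omega), hd1c, hcastN, hD1def]
    norm_num
  have i1Q : (t0 + e2) % (2 * Q) = Q ↔ D1Q := by
    rw [ntu_mod_eq_iff _ _ _ (by omega) (by omega : Q < 2 * Q), hd1c, hcastN, hD1Qdef]
  have i20 : (e1 + 4 * Q - (t0 + 1)) % (2 * Q) = 0 ↔ D2 := by
    rw [ntu_mod_eq_iff _ _ _ (by omega) (by omega), hd2c, hcastN, hD2def]
    constructor
    · rintro ⟨c, hc⟩; exact ⟨c - 2, by push_cast at hc ⊢; linear_combination hc⟩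
    · rintro ⟨c, hc⟩; exact ⟨c + 2, by push_cast at hc ⊢; linear_combination hc⟩
  have i2Q : (e1 + 4 * Q - (t0 + 1)) % (2 * Q) = Q ↔ D2Q := by
    rw [ntu_mod_eq_iff _ _ _ (by omega) (by omega : Q < 2 * Q), hd2c, hcastN, hD2Qdef]
    constructor
    · rintro ⟨c, hc⟩; exact ⟨c - 1, by push_cast at hc ⊢; linear_combination hc⟩
    · rintro ⟨c, hc⟩; exact ⟨c + 1, by push_cast at hc ⊢; linear_combination hc⟩
  -- goal conditions
  have c1a : (τ0 ≡ -(e2:ℤ) - (Q:ℤ) [ZMOD ((2 * Q : ℕ) : ℤ)]) ↔ D1Q := by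
    rw [Int.modEq_iff_dvd, hcastN, hD1Qdef]
    constructor
    · rintro ⟨c, hc⟩; exact ⟨-c - 1, by linear_combination -hc⟩
    · rintro ⟨c, hc⟩; exact ⟨-c - 1, by linear_combination -hc⟩
  have c1b : (τ0 ≡ (e1:ℤ) - 1 + (Q:ℤ) [ZMOD ((2 * Q : ℕ) : ℤ)]) ↔ D2Q := by
    rw [Int.modEq_iff_dvd, hcastN, hD2Qdef]
  have c2a : (τ0 ≡ -(e2:ℤ) [ZMOD ((2 * Q : ℕ) : ℤ)]) ↔ D1 := by
    rw [Int.modEq_iff_dvd, hcastN, hD1def]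
    constructor
    · rintro ⟨c, hc⟩; exact ⟨-c, by linear_combination -hc⟩
    · rintro ⟨c, hc⟩; exact ⟨-c, by linear_combination -hc⟩
  have c2b : (τ0 ≡ (e1:ℤ) - 1 [ZMOD ((2 * Q : ℕ) : ℤ)]) ↔ D2 := by
    rw [Int.modEq_iff_dvd, hcastN, hD2def]
  -- hypotheses as dvd
  have hc1' : ¬ (2 * (Q:ℤ)) ∣ (1 - ((e1:ℤ) + (e2:ℤ))) := by
    intro hdvd
    exact hcond1 (by rw [Int.modEq_iff_dvd, hcastN]; exact hdvd)
  have hc2' : ¬ (2 * (Q:ℤ)) ∣ ((1 - (Q:ℤ)) - ((e1:ℤ) + (e2:ℤ))) := by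
    intro hdvd
    exact hcond2 (by rw [Int.modEq_iff_dvd, hcastN]; exact hdvd)
  -- exclusivity
  have X1 : ¬ (D1 ∧ D2) := by
    rintro ⟨⟨c1, hc1⟩, ⟨c2, hc2⟩⟩
    exact hc1' ⟨-c1 - c2, by linear_combination -hc1 - hc2⟩
  have X2 : ¬ (D1Q ∧ D2Q) := by
    rintro ⟨⟨c1, hc1⟩, ⟨c2, hc2⟩⟩
    exact hc1' ⟨-c1 - c2, by linear_combination -hc1 - hc2⟩
  have X3 : ¬ (D1 ∧ D2Q) := by
    rintro ⟨⟨c1, hc1⟩, ⟨c2, hc2⟩⟩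
    exact hc2' ⟨-c1 - c2, by linear_combination -hc1 - hc2⟩
  have X4 : ¬ (D1Q ∧ D2) := by
    rintro ⟨⟨c1, hc1⟩, ⟨c2, hc2⟩⟩
    exact hc2' ⟨-c1 - c2 - 1, by linear_combination -hc1 - hc2⟩
  have X5 : ¬ (D1 ∧ D1Q) := by
    rintro ⟨⟨c1, hc1⟩, ⟨c2, hc2⟩⟩
    have : (Q:ℤ) = 2 * Q * (c1 - c2) := by linear_combination hc1 - hc2
    have hQz : (0:ℤ) < (Q:ℤ) := by exact_mod_cast hQ0
    rcases le_or_gt (c1 - c2) 0 with h | h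
    · have h2 : 2 * (Q:ℤ) * (c1 - c2) ≤ 0 :=
        mul_nonpos_of_nonneg_of_nonpos (by linarith) h
      linarith
    · have h2 : 2 * (Q:ℤ) * 1 ≤ 2 * (Q:ℤ) * (c1 - c2) :=
        mul_le_mul_of_nonneg_left h (by linarith)
      linarith
  have X6 : ¬ (D2 ∧ D2Q) := by
    rintro ⟨⟨c1, hc1⟩, ⟨c2, hc2⟩⟩
    have : (Q:ℤ) = 2 * Q * (c2 - c1) := by linear_combination hc2 - hc1
    have hQz : (0:ℤ) < (Q:ℤ) := by exact_mod_cast hQ0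
    rcases le_or_gt (c2 - c1) 0 with h | h
    · have h2 : 2 * (Q:ℤ) * (c2 - c1) ≤ 0 :=
        mul_nonpos_of_nonneg_of_nonpos (by linarith) h
      linarith
    · have h2 : 2 * (Q:ℤ) * 1 ≤ 2 * (Q:ℤ) * (c2 - c1) :=
        mul_le_mul_of_nonneg_left h (by linarith)
      linarith
  -- final case analysis
  by_cases h1q : D1Q
  · have h10 : ¬ D1 := fun h => X5 ⟨h, h1q⟩
    have h20 : ¬ D2 := fun h => X4 ⟨h1q, h⟩
    have h2q : ¬ D2Q := fun h => X2 ⟨h1q, h⟩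
    rw [if_neg (fun h => h10 (i10.mp h)), if_pos (i1Q.mpr h1q),
      if_neg (fun h => h20 (i20.mp h)), if_neg (fun h => h2q (i2Q.mp h)),
      if_pos (Or.inl (c1a.mpr h1q)), hN2']
    push_cast
    ring
  · by_cases h2q : D2Q
    · have h10 : ¬ D1 := fun h => X3 ⟨h, h2q⟩
      have h20 : ¬ D2 := fun h => X6 ⟨h, h2q⟩
      rw [if_neg (fun h => h10 (i10.mp h)), if_neg (fun h => h1q (i1Q.mp h)),
        if_neg (fun h => h20 (i20.mp h)), if_pos (i2Q.mpr h2q),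
        if_pos (Or.inr (c1b.mpr h2q)), hN2']
      push_cast
      ring
    · have hnotfirst : ¬ (τ0 ≡ -(e2:ℤ) - (Q:ℤ) [ZMOD ((2 * Q : ℕ) : ℤ)]
          ∨ τ0 ≡ (e1:ℤ) - 1 + (Q:ℤ) [ZMOD ((2 * Q : ℕ) : ℤ)]) := by
        rintro (h | h)
        · exact h1q (c1a.mp h)
        · exact h2q (c1b.mp h)
      rw [if_neg hnotfirst]
      by_cases h10 : D1
      · have h20 : ¬ D2 := fun h => X1 ⟨h10, h⟩
        rw [if_pos (i10.mpr h10),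
          if_neg (fun h => h20 (i20.mp h)), if_neg (fun h => h2q (i2Q.mp h)),
          if_pos (Or.inl (c2a.mpr h10)), hN1', hN2']
        push_cast
        ring
      · by_cases h20 : D2
        · rw [if_neg (fun h => h10 (i10.mp h)), if_neg (fun h => h1q (i1Q.mp h)),
            if_pos (i20.mpr h20),
            if_pos (Or.inr (c2b.mpr h20)), hN1', hN2']
          push_cast
          ring
        · have hnotsecond : ¬ (τ0 ≡ -(e2:ℤ) [ZMOD ((2 * Q : ℕ) : ℤ)]
              ∨ τ0 ≡ (e1:ℤ) - 1 [ZMOD ((2 * Q : ℕ) : ℤ)]) := by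
            rintro (h | h)
            · exact h10 (c2a.mp h)
            · exact h20 (c2b.mp h)
          rw [if_neg (fun h => h10 (i10.mp h)), if_neg (fun h => h1q (i1Q.mp h)),
            if_neg (fun h => h20 (i20.mp h)), if_neg (fun h => h2q (i2Q.mp h)),
            if_neg hnotsecond, hN2']
          push_cast
          ring
end
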